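/- arXiv:2003.06341 — 7 statements merged into one kernel-verified Lean document; each statement's English description precedes it below -/
import Mathlib

section
/- Consider the SIS model under multi-layer Markovian mobility, with F* = F(v), L* = L(v), and M = I − F*. Let s = min over all nm block-extended indices k of (δ_k − β_k), let Δ = D − B − sI (assume Δ ≠ 0), let w ≫ 0 be a left null vector of B M + L* (i.e., w^⊤(B M + L*) = 0) normalized so max_k w_k = 1, let W = diag(w), and let λ₂ be the second smallest eigenvalue of the symmetric matrix (1/2)(W(B M + L*) + (B M + L*)^⊤ W). If λ₂ / ((1 + √(1 + λ₂/Σ_k w_k(δ_k − β_k − s)))² · nm + 1) + s ≥ 0, then μ(B F* − D − L*) ≤ 0, where μ(G) is the largest real part of an eigenvalue of G. -/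
open Matrix Finset Filter

namespace SISMobility

/-- Index type for (class, patch) pairs: `(α, i)` with `α ∈ {1,…,m}` a class and
`i ∈ {1,…,n}` a patch. -/
abbrev Idx (n m : ℕ) := Fin m × Fin n

/-- A CTMC generator matrix: nonnegative off-diagonal entries and zero row sums
(so that the diagonal entry is minus the total outgoing rate). -/
def IsGenerator {n : ℕ} (Q : Matrix (Fin n) (Fin n) ℝ) : Prop :=
  (∀ i j, i ≠ j → 0 ≤ Q i j) ∧ ∀ i, ∑ j, Q i j = 0

/-- Strong connectivity of the digraph on `{1,…,n}` with an edge `(i,j)` whenever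
`i ≠ j` and `Q i j > 0`. -/
def StronglyConnected {n : ℕ} (Q : Matrix (Fin n) (Fin n) ℝ) : Prop :=
  ∀ i j : Fin n, Relation.ReflTransGen (fun a b => a ≠ b ∧ 0 < Q a b) i j

/-- The `nm × nm` block-diagonal infection-rate matrix `B` (m copies of `diag β`). -/
noncomputable def Bmat (n m : ℕ) (β : Fin n → ℝ) : Matrix (Idx n m) (Idx n m) ℝ :=
  Matrix.diagonal fun k => β k.2

/-- The `nm × nm` block-diagonal recovery-rate matrix `D` (m copies of `diag δ`). -/
noncomputable def Dmat (n m : ℕ) (δ : Fin n → ℝ) : Matrix (Idx n m) (Idx n m) ℝ :=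
  Matrix.diagonal fun k => δ k.2

/-- The block-diagonal mobility matrix `L(x)`: the `α`-block has entries
`l^α_{ii} = ∑_{j≠i} q^α_{ji} x^α_j / x^α_i` and `l^α_{ij} = -q^α_{ji} x^α_j / x^α_i`. -/
noncomputable def Lmat {n m : ℕ} (Q : Fin m → Matrix (Fin n) (Fin n) ℝ)
    (x : Idx n m → ℝ) : Matrix (Idx n m) (Idx n m) ℝ :=
  fun k l =>
    if k.1 = l.1 then
      if k.2 = l.2 then ∑ j ∈ Finset.univ.filter (· ≠ k.2), Q k.1 j k.2 * x (k.1, j) / x k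
      else -(Q k.1 l.2 k.2 * x (k.1, l.2) / x k)
    else 0

/-- The population-fraction matrix `F(x)`: entry `((α,i),(γ,j))` equals
`x^γ_i / ∑_η x^η_i` if `j = i` and `0` otherwise. -/
noncomputable def Fmat {n m : ℕ} (x : Idx n m → ℝ) : Matrix (Idx n m) (Idx n m) ℝ :=
  fun k l => if l.2 = k.2 then x (l.1, k.2) / ∑ η : Fin m, x (η, k.2) else 0

/-- Right-hand side of the infection dynamics
`ṗ = (B F(x) − D − L(x)) p − diag(p) B F(x) p`. -/
noncomputable def pRHS {n m : ℕ} (β δ : Fin n → ℝ) (Q : Fin m → Matrix (Fin n) (Fin n) ℝ)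
    (x p : Idx n m → ℝ) : Idx n m → ℝ :=
  (Bmat n m β * Fmat x - Dmat n m δ - Lmat Q x).mulVec p -
    (Matrix.diagonal p * (Bmat n m β * Fmat x)).mulVec p

/-- Right-hand side of the mobility dynamics `ẋ^α = (Q^α)ᵀ x^α`. -/
noncomputable def xRHS {n m : ℕ} (Q : Fin m → Matrix (Fin n) (Fin n) ℝ)
    (x : Idx n m → ℝ) : Idx n m → ℝ :=
  fun k => ∑ j, Q k.1 j k.2 * x (k.1, j)

/-- `(p, x)` is a solution of the SIS model under multi-layer Markovian mobility. -/
def IsSolution {n m : ℕ} (β δ : Fin n → ℝ) (Q : Fin m → Matrix (Fin n) (Fin n) ℝ)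
    (p x : ℝ → Idx n m → ℝ) : Prop :=
  ∀ t : ℝ, 0 ≤ t → ∀ k : Idx n m,
    HasDerivAt (fun s => p s k) (pRHS β δ Q (x t) (p t) k) t ∧
    HasDerivAt (fun s => x s k) (xRHS Q (x t) k) t

/-- The radial abscissa `μ(G)`: the largest real part of a (complex) eigenvalue of a
real matrix `G`. -/
noncomputable def muMax {ι : Type*} [Fintype ι] [DecidableEq ι] (G : Matrix ι ι ℝ) : ℝ :=
  sSup (Complex.re '' spectrum ℂ (G.map (algebraMap ℝ ℂ)))

/-- The spectral radius `ρ(G)` of a real matrix `G`. -/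
noncomputable def specRad {ι : Type*} [Fintype ι] [DecidableEq ι] (G : Matrix ι ι ℝ) : ℝ :=
  sSup ((fun z : ℂ => ‖z‖) '' spectrum ℂ (G.map (algebraMap ℝ ℂ)))

/-- The fixed-point map `H(p) = (I + A(diag p + (I − diag p) M))⁻¹ A p`. -/
noncomputable def Hfun {n m : ℕ} (A M : Matrix (Idx n m) (Idx n m) ℝ)
    (p : Idx n m → ℝ) : Idx n m → ℝ :=
  ((1 + A * (Matrix.diagonal p + (1 - Matrix.diagonal p) * M))⁻¹).mulVec (A.mulVec p)

end SISMobility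

open SISMobility


set_option linter.unusedSectionVars false
set_option maxHeartbeats 1000000

namespace SISaux
variable {ι : Type*} [Fintype ι] [DecidableEq ι]

variable {ι : Type*} [Fintype ι] [DecidableEq ι]

lemma inner_eq (x y : EuclideanSpace ℝ ι) : (inner ℝ x y : ℝ) = ∑ i, x i * y i := by
  rw [PiLp.inner_apply]; simp [RCLike.inner_apply, mul_comm]

lemma onb_sum (S : Matrix ι ι ℝ) (hS : S.IsHermitian) (i j : ι) :
    ∑ k, hS.eigenvectorBasis i k * hS.eigenvectorBasis j k = if i = j then 1 else 0 := by
  have h2 := orthonormal_iff_ite.mp hS.eigenvectorBasis.orthonormal i j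
  rw [PiLp.inner_apply] at h2
  simpa [RCLike.inner_apply, starRingEnd_apply, mul_comm] using h2

lemma parseval (S : Matrix ι ι ℝ) (hS : S.IsHermitian) (x : ι → ℝ) :
    ∑ i, (∑ k, hS.eigenvectorBasis i k * x k)^2 = ∑ k, x k ^ 2 := by
  have h := hS.eigenvectorBasis.sum_inner_mul_inner (WithLp.toLp 2 x) (WithLp.toLp 2 x)
  simp_rw [inner_eq] at h
  calc ∑ i, (∑ k, hS.eigenvectorBasis i k * x k)^2
      = ∑ i, (∑ k, x k * hS.eigenvectorBasis i k) * (∑ k, hS.eigenvectorBasis i k * x k) := by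
        refine Finset.sum_congr rfl fun i _ => ?_
        rw [sq]; congr 1; exact Finset.sum_congr rfl fun k _ => mul_comm _ _
    _ = ∑ k, x k * x k := h
    _ = ∑ k, x k ^ 2 := by simp [sq]

lemma eigen_apply (S : Matrix ι ι ℝ) (hS : S.IsHermitian) (i k : ι) :
    ∑ l, S k l * hS.eigenvectorBasis i l = hS.eigenvalues i * hS.eigenvectorBasis i k := by
  have h := congrFun (hS.mulVec_eigenvectorBasis i) k
  simpa [Matrix.mulVec, dotProduct] using h

lemma sym_apply (S : Matrix ι ι ℝ) (hS : S.IsHermitian) (k l : ι) : S k l = S l k := by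
  have := congrFun (congrFun hS.eq k) l
  simpa [Matrix.conjTranspose_apply] using this.symm

lemma quad_spectral (S : Matrix ι ι ℝ) (hS : S.IsHermitian) (x : ι → ℝ) :
    x ⬝ᵥ S *ᵥ x = ∑ i, hS.eigenvalues i * (∑ k, hS.eigenvectorBasis i k * x k)^2 := by
  have h := hS.eigenvectorBasis.sum_inner_mul_inner
    (WithLp.toLp 2 x) (WithLp.toLp 2 (S *ᵥ x : ι → ℝ))
  simp_rw [inner_eq] at h
  have hbSx : ∀ i, ∑ k, hS.eigenvectorBasis i k * (S *ᵥ x) k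
      = hS.eigenvalues i * ∑ k, hS.eigenvectorBasis i k * x k := by
    intro i
    calc ∑ k, hS.eigenvectorBasis i k * (S *ᵥ x) k
        = ∑ k, ∑ l, hS.eigenvectorBasis i k * S k l * x l := by
          refine Finset.sum_congr rfl fun k _ => ?_
          simp [Matrix.mulVec, dotProduct, Finset.mul_sum, mul_assoc]
      _ = ∑ l, (∑ k, S l k * hS.eigenvectorBasis i k) * x l := by
          rw [Finset.sum_comm]
          refine Finset.sum_congr rfl fun l _ => ?_
          rw [Finset.sum_mul]
          refine Finset.sum_congr rfl fun k _ => ?_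
          rw [sym_apply S hS k l]; ring
      _ = ∑ l, hS.eigenvalues i * hS.eigenvectorBasis i l * x l := by
          refine Finset.sum_congr rfl fun l _ => ?_
          rw [eigen_apply S hS i l]
      _ = hS.eigenvalues i * ∑ l, hS.eigenvectorBasis i l * x l := by
          rw [Finset.mul_sum]; refine Finset.sum_congr rfl fun l _ => by ring
  calc x ⬝ᵥ S *ᵥ x = ∑ k, x k * (S *ᵥ x) k := by simp [dotProduct]
    _ = ∑ i, (∑ k, x k * hS.eigenvectorBasis i k) * (∑ k, hS.eigenvectorBasis i k * (S *ᵥ x) k) := h.symm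
    _ = ∑ i, hS.eigenvalues i * (∑ k, hS.eigenvectorBasis i k * x k)^2 := by
        refine Finset.sum_congr rfl fun i _ => ?_
        rw [hbSx i, sq]
        have : ∑ k, x k * hS.eigenvectorBasis i k = ∑ k, hS.eigenvectorBasis i k * x k :=
          Finset.sum_congr rfl fun k _ => mul_comm _ _
        rw [this]; ring

lemma expand_pointwise (S : Matrix ι ι ℝ) (hS : S.IsHermitian) (x : ι → ℝ) (k : ι) :
    x k = ∑ i, (∑ l, hS.eigenvectorBasis i l * x l) * hS.eigenvectorBasis i k := by
  have h := hS.eigenvectorBasis.sum_repr' (WithLp.toLp 2 x)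
  have h2 := congrArg (fun v : EuclideanSpace ℝ ι => v k) h
  have h3 : (∑ i, (inner ℝ (hS.eigenvectorBasis i) (WithLp.toLp 2 x) : ℝ) • hS.eigenvectorBasis i) k
      = ∑ i, (inner ℝ (hS.eigenvectorBasis i) (WithLp.toLp 2 x) : ℝ) * hS.eigenvectorBasis i k := by
    rw [WithLp.ofLp_sum, Finset.sum_apply k univ]
    rfl
  simp only at h2
  rw [h3] at h2
  rw [← h2]
  refine (Finset.sum_congr rfl fun i _ => ?_)
  rw [inner_eq]

/-- Laplacian-type quadratic form nonnegativity. -/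
lemma laplacian_psd (M : Matrix ι ι ℝ) (hsym : ∀ k l, M k l = M l k)
    (hrow : ∀ k, ∑ l, M k l = 0) (hoff : ∀ k l, k ≠ l → M k l ≤ 0) (x : ι → ℝ) :
    0 ≤ x ⬝ᵥ M *ᵥ x := by
  have key : x ⬝ᵥ M *ᵥ x = (1/2) * ∑ k, ∑ l, (-(M k l)) * (x k - x l)^2 := by
    have expand : ∀ k l : ι, (-(M k l)) * (x k - x l)^2
        = 2 * (M k l * (x k * x l)) - M k l * x k^2 - M k l * x l^2 := by intros; ring
    have e1 : ∑ k, ∑ l, (-(M k l)) * (x k - x l)^2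
        = (∑ k, ∑ l, 2*(M k l * (x k * x l))) - (∑ k, ∑ l, M k l * x k^2)
          - (∑ k, ∑ l, M k l * x l^2) := by
      simp_rw [expand, Finset.sum_sub_distrib]
    have h1 : ∑ k, ∑ l, M k l * x k ^ 2 = 0 := by
      refine Finset.sum_eq_zero fun k _ => ?_
      rw [← Finset.sum_mul, hrow k, zero_mul]
    have h2 : ∑ k, ∑ l, M k l * x l ^2 = 0 := by
      rw [Finset.sum_comm]
      refine Finset.sum_eq_zero fun l _ => ?_
      have hcol : ∑ k, M k l = 0 := by
        rw [show ∑ k, M k l = ∑ k, M l k from Finset.sum_congr rfl fun k _ => hsym k l, hrow l]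
      rw [← Finset.sum_mul, hcol, zero_mul]
    have h3 : x ⬝ᵥ M *ᵥ x = ∑ k, ∑ l, M k l * (x k * x l) := by
      simp only [dotProduct, Matrix.mulVec, Finset.mul_sum]
      exact Finset.sum_congr rfl fun k _ => Finset.sum_congr rfl fun l _ => by ring
    rw [e1, h1, h2, h3]
    rw [show ∑ k, ∑ l, 2*(M k l * (x k * x l)) = 2 * ∑ k, ∑ l, M k l * (x k * x l) by
      simp_rw [Finset.mul_sum]]
    ring
  rw [key]
  have : ∀ k ∈ univ, (0:ℝ) ≤ ∑ l, (-(M k l)) * (x k - x l)^2 := by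
    intro k _
    refine Finset.sum_nonneg fun l _ => ?_
    by_cases h : k = l
    · subst h; simp
    · exact mul_nonneg (neg_nonneg.mpr (hoff k l h)) (sq_nonneg _)
  exact mul_nonneg (by norm_num) (Finset.sum_nonneg this)


variable {ι : Type*} [Fintype ι] [DecidableEq ι]

lemma sorted_facts (f : ι → ℝ) (hcard : 2 ≤ Fintype.card ι) (lam2 : ℝ)
    (hl : lam2 = (Multiset.sort (Finset.univ.val.map f) (· ≤ ·)).getD 1 0) :
    (∃ i, f i = lam2) ∧ ∀ i j, i ≠ j → f i < lam2 → f j < lam2 → False := by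
  obtain ⟨L, hL⟩ : ∃ L, Multiset.sort (Finset.univ.val.map f) (· ≤ ·) = L := ⟨_, rfl⟩
  rw [hL] at hl
  have hlen : L.length = Fintype.card ι := by
    rw [← hL, Multiset.length_sort, Multiset.card_map]
    rfl
  have hsort : List.Pairwise (· ≤ ·) L := hL ▸ Multiset.pairwise_sort _ _
  have hcoe : (L : Multiset ℝ) = Finset.univ.val.map f := hL ▸ Multiset.sort_eq _ _
  clear hL
  obtain ⟨a, L1, rfl⟩ : ∃ a L1, L = a :: L1 := by
    cases L with
    | nil => simp at hlen; omega
    | cons a L1 => exact ⟨a, L1, rfl⟩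
  obtain ⟨b, tl, rfl⟩ : ∃ b tl, L1 = b :: tl := by
    cases L1 with
    | nil => simp at hlen; omega
    | cons b tl => exact ⟨b, tl, rfl⟩
  have hlam : lam2 = b := by rw [hl]; rfl
  have hb_tl : ∀ y ∈ tl, b ≤ y := (List.pairwise_cons.mp (List.pairwise_cons.mp hsort).2).1
  constructor
  · have hmem : b ∈ (Finset.univ.val.map f) := by
      rw [← hcoe]; simp
    obtain ⟨i, _, hi⟩ := Multiset.mem_map.mp hmem
    exact ⟨i, by rw [hlam]; exact hi⟩
  · intro i j hne hi hj
    have h2 : 2 ≤ (Finset.univ.filter (fun a => f a < lam2)).card := by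
      rw [Nat.succ_le_iff, Finset.one_lt_card]
      exact ⟨i, by simp [hi], j, by simp [hj], hne⟩
    have hcount : Multiset.countP (fun y => y < lam2) (Finset.univ.val.map f)
        = (Finset.univ.filter (fun a => f a < lam2)).card := by
      rw [Multiset.countP_map]
      rfl
    have hcount2 : Multiset.countP (fun y => y < lam2) ((a :: b :: tl : List ℝ) : Multiset ℝ)
        ≤ 1 := by
      have htl : List.countP (fun y => decide (y < lam2)) tl = 0 := by
        rw [List.countP_eq_zero]
        intro y hy
        simp only [decide_eq_true_eq]
        exact not_lt.mpr (hlam ▸ hb_tl y hy)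
      simp only [Multiset.coe_countP, List.countP_cons, htl]
      have : ¬ (b < lam2) := by rw [hlam]; exact lt_irrefl b
      simp [this]
      split <;> omega
    rw [hcoe, hcount] at hcount2
    omega

lemma eigenvalues_nonneg_of_psd (S : Matrix ι ι ℝ) (hS : S.IsHermitian)
    (hPSD : ∀ y : ι → ℝ, 0 ≤ y ⬝ᵥ S *ᵥ y) (i : ι) : 0 ≤ hS.eigenvalues i := by
  have h := hPSD (hS.eigenvectorBasis i)
  rw [quad_spectral S hS] at h
  have hexp : ∀ j, hS.eigenvalues j * (∑ k, hS.eigenvectorBasis j k * hS.eigenvectorBasis i k)^2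
      = if j = i then hS.eigenvalues i else 0 := by
    intro j
    rw [onb_sum S hS j i]
    by_cases hji : j = i <;> simp [hji]
  rw [Finset.sum_congr rfl fun j _ => hexp j, Finset.sum_ite_eq' univ i fun _ => hS.eigenvalues i] at h
  simpa using h

lemma key_quad_bound (S : Matrix ι ι ℝ) (hS : S.IsHermitian)
    (hPSD : ∀ y : ι → ℝ, 0 ≤ y ⬝ᵥ S *ᵥ y)
    (hrow : ∀ k, ∑ l, S k l = 0)
    (hcard : 2 ≤ Fintype.card ι)
    (lam2 : ℝ)
    (hl : lam2 = (Multiset.sort (Finset.univ.val.map hS.eigenvalues) (· ≤ ·)).getD 1 0)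
    (d : ι → ℝ) (hd : ∀ k, 0 ≤ d k) (htpos : 0 < ∑ k, d k)
    (x : ι → ℝ) :
    lam2 / ((1 + Real.sqrt (1 + lam2 / ∑ k, d k))^2 * (Fintype.card ι : ℝ) + 1) * (∑ k, x k ^ 2)
      ≤ x ⬝ᵥ S *ᵥ x + ∑ k, d k * x k ^ 2 := by
  have hNr : (0:ℝ) < (Fintype.card ι : ℝ) := by
    exact_mod_cast lt_of_lt_of_le (by norm_num) hcard
  set t := ∑ k, d k with ht
  set Nr : ℝ := (Fintype.card ι : ℝ) with hNrdef
  set g : ℝ := 1 + Real.sqrt (1 + lam2 / t) with hg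
  set den : ℝ := g^2 * Nr + 1 with hden
  have hdenpos : 0 < den := by positivity
  have hX2 : 0 ≤ ∑ k, x k ^ 2 := Finset.sum_nonneg fun k _ => sq_nonneg _
  have hdx : 0 ≤ ∑ k, d k * x k ^ 2 :=
    Finset.sum_nonneg fun k _ => mul_nonneg (hd k) (sq_nonneg _)
  have hRHS : 0 ≤ x ⬝ᵥ S *ᵥ x + ∑ k, d k * x k ^ 2 := add_nonneg (hPSD x) hdx
  rcases le_or_gt lam2 0 with hneg | hpos
  · calc lam2 / den * (∑ k, x k ^ 2) ≤ 0 :=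
          mul_nonpos_of_nonpos_of_nonneg (div_nonpos_of_nonpos_of_nonneg hneg hdenpos.le) hX2
      _ ≤ _ := hRHS
  -- main case : 0 < lam2
  obtain ⟨⟨iex, hiex⟩, hcnt⟩ := sorted_facts hS.eigenvalues hcard lam2 hl
  have hlc1 : ∀ i, hS.eigenvalues i * (∑ l, hS.eigenvectorBasis i l) = 0 := by
    intro i
    rw [Finset.mul_sum,
      Finset.sum_congr rfl fun k _ => (eigen_apply S hS i k).symm, Finset.sum_comm]
    refine Finset.sum_eq_zero fun l _ => ?_
    rw [← Finset.sum_mul,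
      show ∑ k, S k l = 0 from by
        rw [Finset.sum_congr rfl fun k _ => sym_apply S hS k l]; exact hrow l,
      zero_mul]
  have hi0 : ∃ i0, (∑ l, hS.eigenvectorBasis i0 l) ≠ 0 := by
    by_contra hcon
    push_neg at hcon
    have hp := parseval S hS (fun _ => (1:ℝ))
    simp only [mul_one, one_pow] at hp
    have hL : ∑ i : ι, (∑ k, hS.eigenvectorBasis i k)^2 = 0 :=
      Finset.sum_eq_zero fun i _ => by rw [hcon i]; ring
    have hR : ∑ _k : ι, (1:ℝ) = (Fintype.card ι : ℝ) := by
      simp [Finset.sum_const, Finset.card_univ]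
    rw [hL, hR] at hp
    linarith [hNr]
  obtain ⟨i0, hi0⟩ := hi0
  have hlam0 : hS.eigenvalues i0 = 0 := by
    rcases mul_eq_zero.mp (hlc1 i0) with h | h
    · exact h
    · exact absurd h hi0
  have hge : ∀ i, i ≠ i0 → lam2 ≤ hS.eigenvalues i := by
    intro i hne
    by_contra hlt
    exact hcnt i i0 hne (not_le.mp hlt) (by rw [hlam0]; exact hpos)
  have hc1z : ∀ i, i ≠ i0 → (∑ l, hS.eigenvectorBasis i l) = 0 := by
    intro i hne
    rcases mul_eq_zero.mp (hlc1 i) with h | h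
    · exact absurd h (lt_of_lt_of_le hpos (hge i hne)).ne'
    · exact h
  have hconst : ∀ k, hS.eigenvectorBasis i0 k = 1 / (∑ l, hS.eigenvectorBasis i0 l) := by
    intro k
    have h := expand_pointwise S hS (fun _ => (1:ℝ)) k
    simp only [mul_one] at h
    rw [Finset.sum_eq_single i0 (fun i _ hne => by rw [hc1z i hne]; ring)
      (fun h => absurd (Finset.mem_univ i0) h)] at h
    field_simp
    linarith [h]
  have hc1sq : (∑ l, hS.eigenvectorBasis i0 l) ^ 2 = Nr := by
    have h := onb_sum S hS i0 i0
    simp only [if_pos rfl] at h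
    rw [Finset.sum_congr rfl fun k _ =>
      show hS.eigenvectorBasis i0 k * hS.eigenvectorBasis i0 k
        = (1 / (∑ l, hS.eigenvectorBasis i0 l))^2 from by rw [hconst k]; ring] at h
    rw [Finset.sum_const, Finset.card_univ, nsmul_eq_mul] at h
    have hne : (∑ l, hS.eigenvectorBasis i0 l) ≠ 0 := hi0
    field_simp at h
    simp only [↓reduceIte, mul_one] at h
    linarith [h, hNrdef]
  -- mean decomposition
  set a : ℝ := (∑ k, x k) / Nr with ha
  have hsum : ∑ k, x k = Nr * a := by rw [ha]; field_simp
  set X2 := ∑ k, x k ^ 2 with hX2def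
  set rho2 := ∑ k, (x k - a)^2 with hrho2
  have hrho2nn : 0 ≤ rho2 := Finset.sum_nonneg fun k _ => sq_nonneg _
  have hpyth : rho2 = X2 - Nr * a^2 := by
    rw [hrho2, hX2def]
    have expad : ∀ k : ι, (x k - a)^2 = x k ^2 - 2*a*(x k) + a^2 := by intro k; ring
    rw [Finset.sum_congr rfl fun k _ => expad k]
    rw [Finset.sum_add_distrib, Finset.sum_sub_distrib, Finset.sum_const, Finset.card_univ,
      nsmul_eq_mul, ← Finset.mul_sum, hsum]
    rw [← hNrdef]
    ring
  -- c i0 squared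
  have hci0sq : (∑ l, hS.eigenvectorBasis i0 l * x l)^2 = Nr * a^2 := by
    rw [Finset.sum_congr rfl fun l _ => by rw [hconst l]]
    rw [← Finset.mul_sum, hsum]
    have hne : (∑ l, hS.eigenvectorBasis i0 l) ≠ 0 := hi0
    have : (1 / (∑ l, hS.eigenvectorBasis i0 l) * (Nr * a))^2
        = (Nr*a)^2 / (∑ l, hS.eigenvectorBasis i0 l)^2 := by
      field_simp
    rw [this, hc1sq]
    field_simp
  -- spectral lower bound
  have hSq : lam2 * rho2 ≤ x ⬝ᵥ S *ᵥ x := by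
    rw [quad_spectral S hS x]
    have hsplit : hS.eigenvalues i0 * (∑ k, hS.eigenvectorBasis i0 k * x k)^2
        + ∑ i ∈ univ.erase i0, hS.eigenvalues i * (∑ k, hS.eigenvectorBasis i k * x k)^2
        = ∑ i, hS.eigenvalues i * (∑ k, hS.eigenvectorBasis i k * x k)^2 :=
      Finset.add_sum_erase univ
        (fun i => hS.eigenvalues i * (∑ k, hS.eigenvectorBasis i k * x k)^2)
        (Finset.mem_univ i0)
    rw [← hsplit, hlam0, zero_mul, zero_add]
    have hres : ∑ i ∈ univ.erase i0, (∑ k, hS.eigenvectorBasis i k * x k)^2 = rho2 := by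
      have hpar := parseval S hS x
      have hsp : (∑ k, hS.eigenvectorBasis i0 k * x k)^2
          + ∑ i ∈ univ.erase i0, (∑ k, hS.eigenvectorBasis i k * x k)^2
          = ∑ i, (∑ k, hS.eigenvectorBasis i k * x k)^2 :=
        Finset.add_sum_erase univ (fun i => (∑ k, hS.eigenvectorBasis i k * x k)^2)
          (Finset.mem_univ i0)
      rw [hpyth, hX2def, ← hpar, ← hsp, hci0sq]
      ring
    have hbound : lam2 * rho2 ≤ ∑ i ∈ univ.erase i0,
        lam2 * (∑ k, hS.eigenvectorBasis i k * x k)^2 := by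
      rw [← Finset.mul_sum, hres]
    refine le_trans hbound (Finset.sum_le_sum fun i hi => ?_)
    exact mul_le_mul_of_nonneg_right (hge i (Finset.ne_of_mem_erase hi)) (sq_nonneg _)
  -- case analysis
  rcases le_or_gt (X2/den) rho2 with hcase | hcase
  · calc lam2 / den * X2 = lam2 * (X2/den) := by ring
      _ ≤ lam2 * rho2 := mul_le_mul_of_nonneg_left hcase hpos.le
      _ ≤ x ⬝ᵥ S *ᵥ x := hSq
      _ ≤ _ := le_add_of_nonneg_right hdx
  · -- rho2 < X2/den
    set th2 := X2/den with hth2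
    have hth2nn : 0 ≤ th2 := div_nonneg hX2 hdenpos.le
    have hth2pos : 0 ≤ th2 := hth2nn
    have hA2 : g^2 * th2 < a^2 := by
      have h1 : Nr * a^2 = X2 - rho2 := by rw [hpyth]; ring
      have h2 : X2 - th2 = g^2 * Nr * th2 := by
        rw [hth2]
        field_simp
        ring
      have h3 : Nr * (g^2 * th2) = X2 - th2 := by rw [h2]; ring
      have h4 : Nr * (g^2*th2) < Nr * a^2 := by linarith [h3, h1, hcase]
      exact lt_of_mul_lt_mul_left h4 hNr.le
    have hgpos : 0 < g := by
      rw [hg]; positivity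
    have hth : Real.sqrt rho2 < Real.sqrt th2 := by
      exact Real.sqrt_lt_sqrt hrho2nn hcase
    have habs : g * Real.sqrt th2 ≤ |a| := by
      have h1 : (g * Real.sqrt th2)^2 = g^2 * th2 := by
        rw [mul_pow, Real.sq_sqrt hth2nn]
      nlinarith [abs_nonneg a, sq_abs a, mul_nonneg hgpos.le (Real.sqrt_nonneg th2)]
    have hlamt : 0 ≤ lam2 / t := div_nonneg hpos.le htpos.le
    have hsq1 : Real.sqrt (lam2 / t) ≤ g - 1 := by
      rw [hg]
      simp only [add_sub_cancel_left]
      exact Real.sqrt_le_sqrt (by linarith)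
    have hkey : Real.sqrt (lam2/t) * Real.sqrt th2 ≤ |a| - Real.sqrt rho2 := by
      have h1 : Real.sqrt (lam2/t) * Real.sqrt th2 ≤ (g-1) * Real.sqrt th2 :=
        mul_le_mul_of_nonneg_right hsq1 (Real.sqrt_nonneg _)
      have h2 : (g-1) * Real.sqrt th2 = g * Real.sqrt th2 - Real.sqrt th2 := by ring
      exact le_trans h1 (by
        rw [h2]
        exact le_trans (sub_le_sub_right habs _) (sub_le_sub_left hth.le _))
    have hkeynn : 0 ≤ |a| - Real.sqrt rho2 :=
      le_trans (mul_nonneg (Real.sqrt_nonneg _) (Real.sqrt_nonneg _)) hkey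
    have hperk : ∀ k, (|a| - Real.sqrt rho2)^2 ≤ x k ^ 2 := by
      intro k
      have h1 : (x k - a)^2 ≤ rho2 :=
        Finset.single_le_sum (fun l _ => sq_nonneg (x l - a)) (Finset.mem_univ k)
      have h2 : |x k - a| ≤ Real.sqrt rho2 := by
        rw [← Real.sqrt_sq_eq_abs]
        exact Real.sqrt_le_sqrt h1
      have h3 : |a| - Real.sqrt rho2 ≤ |x k| := by
        have := abs_sub_abs_le_abs_sub a (x k)
        rw [abs_sub_comm] at this
        linarith
      calc (|a| - Real.sqrt rho2)^2 ≤ |x k|^2 := by nlinarith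
        _ = x k ^2 := sq_abs _
    have hDsum : t * (|a| - Real.sqrt rho2)^2 ≤ ∑ k, d k * x k ^ 2 := by
      rw [ht, Finset.sum_mul]
      exact Finset.sum_le_sum fun k _ => mul_le_mul_of_nonneg_left (hperk k) (hd k)
    have hfinal : lam2 / den * X2 ≤ t * (|a| - Real.sqrt rho2)^2 := by
      have h1 : (Real.sqrt (lam2/t) * Real.sqrt th2)^2 ≤ (|a| - Real.sqrt rho2)^2 := by
        nlinarith [hkey, mul_nonneg (Real.sqrt_nonneg (lam2/t)) (Real.sqrt_nonneg th2)]
      have h2 : (Real.sqrt (lam2/t) * Real.sqrt th2)^2 = (lam2/t) * th2 := by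
        rw [mul_pow, Real.sq_sqrt hlamt, Real.sq_sqrt hth2nn]
      have h3 : t * ((lam2/t)*th2) = lam2 * th2 := by field_simp
      have h4 : lam2 / den * X2 = lam2 * th2 := by rw [hth2]; field_simp
      nlinarith [htpos]
    calc lam2 / den * X2 ≤ t * (|a| - Real.sqrt rho2)^2 := hfinal
      _ ≤ ∑ k, d k * x k ^ 2 := hDsum
      _ ≤ _ := le_add_of_nonneg_left (hPSD x)


variable {ι : Type*} [Fintype ι] [DecidableEq ι]

lemma weighted_quad (K : Matrix ι ι ℝ) (w dfun : ι → ℝ) (y : ι → ℝ) :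
    ∑ k, ∑ l, w k * ((K + Matrix.diagonal dfun) k l) * (y k * y l)
      = y ⬝ᵥ ((1/2 : ℝ) • (Matrix.diagonal w * K + Kᵀ * Matrix.diagonal w)) *ᵥ y
        + ∑ k, w k * dfun k * y k ^ 2 := by
  have hquad : ∀ M : Matrix ι ι ℝ, y ⬝ᵥ M *ᵥ y = ∑ k, ∑ l, M k l * (y k * y l) := by
    intro M
    simp only [dotProduct, Matrix.mulVec, Finset.mul_sum]
    exact Finset.sum_congr rfl fun k _ => Finset.sum_congr rfl fun l _ => by ring
  rw [hquad]
  have hM : ∀ k l, ((1/2 : ℝ) • (Matrix.diagonal w * K + Kᵀ * Matrix.diagonal w)) k l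
      = (1/2) * (w k * K k l + K l k * w l) := by
    intro k l
    simp [Matrix.smul_apply, Matrix.add_apply, Matrix.diagonal_mul, Matrix.mul_diagonal,
      Matrix.transpose_apply]
  simp_rw [hM]
  have hswap : ∑ k, ∑ l, K l k * w l * (y k * y l) = ∑ k, ∑ l, w k * K k l * (y k * y l) := by
    rw [Finset.sum_comm]
    exact Finset.sum_congr rfl fun k _ => Finset.sum_congr rfl fun l _ => by ring
  have hLHS : ∀ k, ∑ l, w k * ((K + Matrix.diagonal dfun) k l) * (y k * y l)
      = (∑ l, w k * K k l * (y k * y l)) + w k * dfun k * y k ^ 2 := by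
    intro k
    rw [Finset.sum_congr rfl (fun l _ =>
      show w k * ((K + Matrix.diagonal dfun) k l) * (y k * y l)
        = w k * K k l * (y k * y l) + (if k = l then w k * dfun k * (y k * y l) else 0) from by
      simp only [Matrix.add_apply, Matrix.diagonal_apply]
      split <;> ring)]
    rw [Finset.sum_add_distrib, Finset.sum_ite_eq univ k
      (fun l => w k * dfun k * (y k * y l)), if_pos (Finset.mem_univ k)]
    congr 1
    ring
  rw [Finset.sum_congr rfl fun k _ => hLHS k, Finset.sum_add_distrib]
  congr 1
  have hhalf : ∀ k l : ι, (1/2:ℝ)*(w k * K k l + K l k * w l)*(y k*y l)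
      = (1/2)*(w k * K k l *(y k * y l)) + (1/2)*(K l k * w l *(y k * y l)) := fun k l => by ring
  simp_rw [hhalf, Finset.sum_add_distrib]
  rw [show ∑ k, ∑ l, (1/2:ℝ)*(K l k * w l *(y k * y l))
      = (1/2) * ∑ k, ∑ l, K l k * w l *(y k * y l) from by simp_rw [Finset.mul_sum],
    show ∑ k, ∑ l, (1/2:ℝ)*(w k * K k l *(y k * y l))
      = (1/2) * ∑ k, ∑ l, w k * K k l *(y k * y l) from by simp_rw [Finset.mul_sum],
    hswap]
  ring

lemma exists_eigenvector_of_mem_spectrum (A : Matrix ι ι ℂ) (z : ℂ)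
    (hz : z ∈ spectrum ℂ A) : ∃ u : ι → ℂ, u ≠ 0 ∧ A *ᵥ u = z • u := by
  have h1 : ¬IsUnit (algebraMap ℂ (Matrix ι ι ℂ) z - A) := spectrum.mem_iff.mp hz
  have h2 : (algebraMap ℂ (Matrix ι ι ℂ) z - A).det = 0 := by
    by_contra hdet
    exact h1 ((Matrix.isUnit_iff_isUnit_det _).mpr (isUnit_iff_ne_zero.mpr hdet))
  obtain ⟨u, hu0, hueq⟩ := (Matrix.exists_mulVec_eq_zero_iff).mpr h2
  refine ⟨u, hu0, ?_⟩
  rw [Algebra.algebraMap_eq_smul_one, Matrix.sub_mulVec, Matrix.smul_mulVec,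
    Matrix.one_mulVec] at hueq
  exact (sub_eq_zero.mp hueq).symm

variable {ι : Type*} [Fintype ι] [DecidableEq ι]

lemma eigen_re_bound (A : Matrix ι ι ℝ) (w : ι → ℝ) (u : ι → ℂ) (ζ : ℂ)
    (hu : A.map (algebraMap ℝ ℂ) *ᵥ u = ζ • u) :
    ζ.re * (∑ k, w k * Complex.normSq (u k))
      = (∑ k, ∑ l, w k * A k l * ((u k).re * (u l).re))
        + (∑ k, ∑ l, w k * A k l * ((u k).im * (u l).im)) := by
  have hAk : ∀ k, ∑ l, (A k l : ℂ) * u l = ζ * u k := by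
    intro k
    have h := congrFun hu k
    simpa [Matrix.mulVec, dotProduct, Matrix.map_apply, Pi.smul_apply,
      smul_eq_mul] using h
  have h1 : ∑ k, (w k : ℂ) * (starRingEnd ℂ) (u k) * (∑ l, (A k l : ℂ) * u l)
      = ζ * ((∑ k, w k * Complex.normSq (u k) : ℝ) : ℂ) := by
    rw [Finset.sum_congr rfl fun k _ => by rw [hAk k]]
    push_cast
    rw [Finset.mul_sum]
    refine Finset.sum_congr rfl fun k _ => ?_
    rw [show ((Complex.normSq (u k) : ℝ) : ℂ) = (starRingEnd ℂ) (u k) * u k from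
      Complex.normSq_eq_conj_mul_self]
    ring
  have h2 : (∑ k, (w k : ℂ) * (starRingEnd ℂ) (u k) * (∑ l, (A k l : ℂ) * u l)).re
      = (∑ k, ∑ l, w k * A k l * ((u k).re * (u l).re))
        + (∑ k, ∑ l, w k * A k l * ((u k).im * (u l).im)) := by
    have hexp : ∀ k, (w k : ℂ) * (starRingEnd ℂ) (u k) * (∑ l, (A k l : ℂ) * u l)
        = ∑ l, (w k : ℂ) * (starRingEnd ℂ) (u k) * ((A k l : ℂ) * u l) := by
      intro k; rw [Finset.mul_sum]
    rw [Finset.sum_congr rfl fun k _ => hexp k, Complex.re_sum]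
    rw [Finset.sum_congr rfl fun k _ => Complex.re_sum univ _]
    rw [← Finset.sum_add_distrib]
    refine Finset.sum_congr rfl fun k _ => ?_
    rw [← Finset.sum_add_distrib]
    refine Finset.sum_congr rfl fun l _ => ?_
    simp [Complex.mul_re, Complex.mul_im, Complex.conj_re, Complex.conj_im,
      Complex.ofReal_re, Complex.ofReal_im]
    ring
  rw [h1] at h2
  rw [← h2]
  simp [Complex.mul_re, Complex.ofReal_re, Complex.ofReal_im]


end SISaux

namespace SISMobility
variable {n m : ℕ}
lemma Fmat_row (x : Idx n m → ℝ) (hx : ∀ i, (∑ η : Fin m, x (η, i)) ≠ 0) (k : Idx n m) :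
    ∑ l, Fmat x k l = 1 := by
  rw [show ∑ l, Fmat x k l = ∑ l1 : Fin m, ∑ l2 : Fin n, Fmat x k (l1, l2) from
    Fintype.sum_prod_type _]
  have h1 : ∀ l1 : Fin m, ∑ l2 : Fin n, Fmat x k (l1, l2) = x (l1, k.2) / ∑ η : Fin m, x (η, k.2) := by
    intro l1
    rw [Finset.sum_eq_single k.2]
    · simp [Fmat]
    · intro l2 _ hne; simp [Fmat, hne]
    · intro h; exact absurd (Finset.mem_univ _) h
  rw [Finset.sum_congr rfl fun l1 _ => h1 l1, ← Finset.sum_div]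
  exact div_self (hx k.2)

lemma Fmat_nonneg (x : Idx n m → ℝ) (hx : ∀ k, 0 < x k) (k l : Idx n m) :
    0 ≤ Fmat x k l := by
  unfold Fmat
  split
  · have h1 : 0 < x (l.1, k.2) := hx _
    have h2 : (0:ℝ) < ∑ η : Fin m, x (η, k.2) :=
      Finset.sum_pos (fun η _ => hx _) ⟨l.1, Finset.mem_univ _⟩
    positivity
  · exact le_refl 0

lemma Lmat_row (Q : Fin m → Matrix (Fin n) (Fin n) ℝ) (x : Idx n m → ℝ) (k : Idx n m) :
    ∑ l, Lmat Q x k l = 0 := by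
  rw [show ∑ l, Lmat Q x k l = ∑ l1 : Fin m, ∑ l2 : Fin n, Lmat Q x k (l1, l2) from
    Fintype.sum_prod_type _]
  rw [Finset.sum_eq_single k.1]
  · have hsplit : ∑ l2 : Fin n, Lmat Q x k (k.1, l2)
        = Lmat Q x k (k.1, k.2) + ∑ l2 ∈ univ.filter (· ≠ k.2), Lmat Q x k (k.1, l2) := by
      rw [← Finset.sum_filter_add_sum_filter_not univ (· = k.2)]
      congr 1
      rw [Finset.filter_eq', if_pos (Finset.mem_univ _), Finset.sum_singleton]
    rw [hsplit]
    have h1 : Lmat Q x k (k.1, k.2) = ∑ j ∈ univ.filter (· ≠ k.2), Q k.1 j k.2 * x (k.1, j) / x k := by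
      simp [Lmat]
    have h2 : ∑ l2 ∈ univ.filter (· ≠ k.2), Lmat Q x k (k.1, l2)
        = -∑ l2 ∈ univ.filter (· ≠ k.2), Q k.1 l2 k.2 * x (k.1, l2) / x k := by
      rw [← Finset.sum_neg_distrib]
      refine Finset.sum_congr rfl fun l2 hl2 => ?_
      have hne : l2 ≠ k.2 := (Finset.mem_filter.mp hl2).2
      simp [Lmat, hne, Ne.symm hne]
    rw [h1, h2]
    ring
  · intro l1 _ hne
    refine Finset.sum_eq_zero fun l2 _ => ?_
    simp [Lmat, Ne.symm hne]
  · intro h; exact absurd (Finset.mem_univ _) h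

lemma Lmat_offdiag (Q : Fin m → Matrix (Fin n) (Fin n) ℝ)
    (hQ : ∀ α i j, i ≠ j → 0 ≤ Q α i j)
    (x : Idx n m → ℝ) (hx : ∀ k, 0 < x k) (k l : Idx n m) (hkl : k ≠ l) :
    Lmat Q x k l ≤ 0 := by
  unfold Lmat
  split
  · rename_i h1
    split
    · rename_i h2
      exact absurd (Prod.ext h1 h2) hkl
    · rename_i h2
      have hq : 0 ≤ Q k.1 l.2 k.2 := hQ k.1 l.2 k.2 fun hc => h2 hc.symm
      have := hx k
      have := hx (k.1, l.2)
      rw [neg_nonpos]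
      positivity
  · exact le_refl 0


end SISMobility

/-- Corollary 1 (iv): with `M = I − F*`, `s = min_k (δ_k − β_k)`,
`Δ = D − B − sI ≠ 0`, `w ≫ 0` a left null vector of `B M + L*` normalized so that
`max_k w_k = 1`, `W = diag w`, and `λ₂` the second smallest eigenvalue of
`(1/2)(W(BM+L*) + (BM+L*)ᵀ W)`, if
`λ₂ / ((1 + √(1 + λ₂/∑_k w_k(δ_k − β_k − s)))² nm + 1) + s ≥ 0` then
`μ(B F* − D − L*) ≤ 0`. -/
theorem lambda2_sufficient_condition
    (n m : ℕ) (hn : 2 ≤ n) (hm : 1 ≤ m)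
    (Q : Fin m → Matrix (Fin n) (Fin n) ℝ)
    (hQgen : ∀ α, IsGenerator (Q α)) (hQirr : ∀ α, StronglyConnected (Q α))
    (β δ : Fin n → ℝ) (hβ : ∀ i, 0 < β i) (hδ : ∀ i, 0 ≤ δ i)
    (vα : Fin m → Fin n → ℝ) (hvαpos : ∀ α i, 0 < vα α i)
    (hvαnorm : ∀ α, ∑ i, vα α i = 1)
    (hvαeig : ∀ α i, ∑ j, Q α j i * vα α j = 0)
    (Npop : Fin m → ℝ) (hNpop : ∀ α, 0 < Npop α)
    (v : Idx n m → ℝ) (hv : ∀ k, v k = Npop k.1 * vα k.1 k.2)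
    -- `K = B M + L*` with `M = I − F*`
    (K : Matrix (Idx n m) (Idx n m) ℝ)
    (hK : K = Bmat n m β * (1 - Fmat v) + Lmat Q v)
    -- `s = min_k (δ_k − β_k)`
    (s : ℝ) (hs : IsLeast (Set.range fun i : Fin n => δ i - β i) s)
    -- `Δ = D − B − s I ≠ 0`
    (hΔ : Dmat n m δ - Bmat n m β - s • (1 : Matrix (Idx n m) (Idx n m) ℝ) ≠ 0)
    -- `w ≫ 0` left null vector of `K`, normalized so that `max_k w_k = 1`
    (w : Idx n m → ℝ) (hwpos : ∀ k, 0 < w k)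
    (hwnull : Matrix.vecMul w K = 0)
    (hwle : ∀ k, w k ≤ 1) (hwmax : ∃ k, w k = 1)
    -- `λ₂` is the second smallest eigenvalue of `(1/2)(W K + Kᵀ W)`
    (S : Matrix (Idx n m) (Idx n m) ℝ)
    (hSdef : S = (1 / 2 : ℝ) • (Matrix.diagonal w * K + Kᵀ * Matrix.diagonal w))
    (hS : S.IsHermitian)
    (lam2 : ℝ)
    (hlam2 : lam2 = (Multiset.sort (Finset.univ.val.map hS.eigenvalues) (· ≤ ·)).getD 1 0)
    -- the sufficient condition
    (hcond : 0 ≤ lam2 /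
        ((1 + Real.sqrt (1 + lam2 / ∑ k : Idx n m, w k * (δ k.2 - β k.2 - s))) ^ 2
          * (n * m : ℝ) + 1) + s) :
    muMax (Bmat n m β * Fmat v - Dmat n m δ - Lmat Q v) ≤ 0 := by
  
  classical
  have hvpos : ∀ k : Idx n m, 0 < v k := fun k => by
    rw [hv]; exact mul_pos (hNpop k.1) (hvαpos k.1 k.2)
  have hmpos : 0 < m := hm
  have hTsum : ∀ i : Fin n, (0:ℝ) < ∑ η : Fin m, v (η, i) := fun i =>
    Finset.sum_pos (fun η _ => hvpos _)
      (Finset.univ_nonempty_iff.mpr (Fin.pos_iff_nonempty.mp hmpos))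
  set dfun : Idx n m → ℝ := fun k => δ k.2 - β k.2 - s with hdfun
  have hdnn : ∀ k, 0 ≤ dfun k := fun k => by
    have := hs.2 (Set.mem_range_self k.2)
    simp only [hdfun]; linarith
  -- row sums of K
  have hKrow : ∀ k, ∑ l, K k l = 0 := by
    intro k
    rw [hK]
    simp only [Matrix.add_apply]
    rw [Finset.sum_add_distrib, Lmat_row, add_zero]
    have hBF : ∀ l, (Bmat n m β * (1 - Fmat v)) k l = β k.2 * ((1 - Fmat v) k l) := by
      intro l
      rw [Bmat, Matrix.diagonal_mul]
    rw [Finset.sum_congr rfl fun l _ => hBF l, ← Finset.mul_sum]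
    have : ∑ l, (1 - Fmat v) k l = 0 := by
      simp only [Matrix.sub_apply]
      rw [Finset.sum_sub_distrib, Fmat_row v (fun i => (hTsum i).ne') k]
      simp [Matrix.one_apply]
    rw [this, mul_zero]
  have hKoff : ∀ k l, k ≠ l → K k l ≤ 0 := by
    intro k l hkl
    rw [hK]
    simp only [Matrix.add_apply]
    have hBF : (Bmat n m β * (1 - Fmat v)) k l = β k.2 * ((1 - Fmat v) k l) := by
      rw [Bmat, Matrix.diagonal_mul]
    rw [hBF]
    have h1 : (1 - Fmat v) k l = - Fmat v k l := by
      simp [Matrix.sub_apply, Matrix.one_apply_ne hkl]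
    rw [h1]
    have h2 : 0 ≤ Fmat v k l := Fmat_nonneg v hvpos k l
    have h3 : Lmat Q v k l ≤ 0 :=
      Lmat_offdiag Q (fun α i j hij => (hQgen α).1 i j hij) v hvpos k l hkl
    nlinarith [(hβ k.2)]
  -- S facts
  have hSsym : ∀ k l, S k l = S l k := fun k l => SISaux.sym_apply S hS k l
  have hSentry : ∀ k l, S k l = (1/2) * (w k * K k l + K l k * w l) := by
    intro k l
    rw [hSdef]
    simp [Matrix.smul_apply, Matrix.add_apply, Matrix.diagonal_mul, Matrix.mul_diagonal,
      Matrix.transpose_apply]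
  have hSrow : ∀ k, ∑ l, S k l = 0 := by
    intro k
    rw [Finset.sum_congr rfl fun l _ => hSentry k l]
    have hvm : ∀ l, ∑ j, w j * K j l = 0 := by
      intro l
      have := congrFun hwnull l
      simpa [Matrix.vecMul, dotProduct] using this
    have e1 : ∑ l, (1/2 : ℝ) * (w k * K k l + K l k * w l)
        = (1/2) * (w k * (∑ l, K k l) + ∑ l, K l k * w l) := by
      rw [← Finset.mul_sum, Finset.sum_add_distrib, ← Finset.mul_sum]
    rw [e1, hKrow k]
    have : ∑ l, K l k * w l = ∑ l, w l * K l k := Finset.sum_congr rfl fun l _ => mul_comm _ _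
    rw [this, hvm k]
    ring
  have hSoff : ∀ k l, k ≠ l → S k l ≤ 0 := by
    intro k l hkl
    rw [hSentry k l]
    have h1 := hKoff k l hkl
    have h2 := hKoff l k (Ne.symm hkl)
    nlinarith [(hwpos k), (hwpos l)]
  have hPSD : ∀ y : Idx n m → ℝ, 0 ≤ y ⬝ᵥ S *ᵥ y :=
    fun y => SISaux.laplacian_psd S hSsym hSrow hSoff y
  -- cardinality
  have hcardnm : Fintype.card (Idx n m) = m * n := by
    simp [Fintype.card_prod]
  have hcard2 : 2 ≤ Fintype.card (Idx n m) := by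
    rw [hcardnm]
    calc 2 = 1 * 2 := by ring
      _ ≤ m * n := Nat.mul_le_mul hm hn
  -- T > 0
  have hdiag : Dmat n m δ - Bmat n m β - s • (1 : Matrix (Idx n m) (Idx n m) ℝ)
      = Matrix.diagonal dfun := by
    ext k l
    by_cases h : k = l
    · subst h
      simp [Dmat, Bmat, Matrix.sub_apply, Matrix.smul_apply, Matrix.one_apply,
        Matrix.diagonal_apply_eq, hdfun]
    · simp [Dmat, Bmat, Matrix.sub_apply, Matrix.smul_apply, Matrix.one_apply_ne h,
        Matrix.diagonal_apply_ne _ h, h]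
  have hex : ∃ k0, dfun k0 ≠ 0 := by
    by_contra hall
    push_neg at hall
    apply hΔ
    rw [hdiag]
    ext k l
    by_cases h : k = l
    · subst h; simp [Matrix.diagonal_apply_eq, hall k]
    · simp [Matrix.diagonal_apply_ne _ h]
  obtain ⟨k0, hk0⟩ := hex
  have hTpos : 0 < ∑ k : Idx n m, w k * dfun k := by
    have hterm : ∀ k ∈ univ, 0 ≤ w k * dfun k :=
      fun k _ => mul_nonneg (hwpos k).le (hdnn k)
    have hk0' : 0 < w k0 * dfun k0 :=
      mul_pos (hwpos k0) (lt_of_le_of_ne (hdnn k0) (Ne.symm hk0))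
    calc 0 < w k0 * dfun k0 := hk0'
      _ ≤ ∑ k, w k * dfun k := Finset.single_le_sum hterm (Finset.mem_univ k0)
  -- lam2 nonneg
  obtain ⟨⟨iex, hiex⟩, _⟩ := SISaux.sorted_facts hS.eigenvalues hcard2 lam2 hlam2
  have hlam2nn : 0 ≤ lam2 := hiex ▸ SISaux.eigenvalues_nonneg_of_psd S hS hPSD iex
  -- the constant
  set cc : ℝ := lam2 / ((1 + Real.sqrt (1 + lam2 / ∑ k : Idx n m, w k * dfun k))^2
      * (Fintype.card (Idx n m) : ℝ) + 1) with hcc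
  have hccnn : 0 ≤ cc := by
    rw [hcc]
    have : (0:ℝ) < (1 + Real.sqrt (1 + lam2 / ∑ k : Idx n m, w k * dfun k))^2
        * (Fintype.card (Idx n m) : ℝ) + 1 := by positivity
    positivity
  have hsc : -s ≤ cc := by
    have hsum_eq : ∑ k : Idx n m, w k * (δ k.2 - β k.2 - s) = ∑ k : Idx n m, w k * dfun k := rfl
    have hcast : ((n:ℝ) * (m:ℝ)) = (Fintype.card (Idx n m) : ℝ) := by
      rw [hcardnm]; push_cast; ring
    rw [hsum_eq, hcast] at hcond
    rw [hcc]
    linarith [hcond]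
  -- spectral bound
  have hspec : ∀ z ∈ spectrum ℂ ((Bmat n m β * Fmat v - Dmat n m δ - Lmat Q v).map
      (algebraMap ℝ ℂ)), z.re ≤ 0 := by
    intro z hz
    obtain ⟨u, hu0, huv⟩ := SISaux.exists_eigenvector_of_mem_spectrum _ z hz
    have hGdec : Bmat n m β * Fmat v - Dmat n m δ - Lmat Q v
        = -(K + Matrix.diagonal dfun) - s • 1 := by
      rw [hK, ← hdiag, Matrix.mul_sub, Matrix.mul_one]
      abel
    have hmap : (Bmat n m β * Fmat v - Dmat n m δ - Lmat Q v).map (algebraMap ℝ ℂ)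
        = -((K + Matrix.diagonal dfun).map (algebraMap ℝ ℂ)) - (s:ℂ) • 1 := by
      rw [hGdec]
      ext k l
      simp only [Matrix.map_apply, Matrix.sub_apply, Matrix.neg_apply, Matrix.smul_apply,
        Matrix.one_apply, smul_eq_mul]
      push_cast [apply_ite (algebraMap ℝ ℂ)]
      ring_nf
      split <;> simp
    have hAu : (K + Matrix.diagonal dfun).map (algebraMap ℝ ℂ) *ᵥ u = (-z - s) • u := by
      rw [hmap, Matrix.sub_mulVec, Matrix.neg_mulVec, Matrix.smul_mulVec,
        Matrix.one_mulVec] at huv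
      funext k
      have hk := congrFun huv k
      simp only [Pi.sub_apply, Pi.neg_apply, Pi.smul_apply, smul_eq_mul] at hk ⊢
      have : ((K + Matrix.diagonal dfun).map (algebraMap ℝ ℂ) *ᵥ u) k
          = -(z * u k) - (s:ℂ) * u k := by linear_combination -hk
      rw [this]; ring
    have hre := SISaux.eigen_re_bound (K + Matrix.diagonal dfun) w u (-z - s) hAu
    set are : Idx n m → ℝ := fun k => (u k).re with hare
    set aim : Idx n m → ℝ := fun k => (u k).im with haim
    have hq1 : ∑ k, ∑ l, w k * ((K + Matrix.diagonal dfun) k l) * (are k * are l)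
        = are ⬝ᵥ S *ᵥ are + ∑ k, w k * dfun k * are k ^ 2 := by
      rw [SISaux.weighted_quad K w dfun are, ← hSdef]
    have hq2 : ∑ k, ∑ l, w k * ((K + Matrix.diagonal dfun) k l) * (aim k * aim l)
        = aim ⬝ᵥ S *ᵥ aim + ∑ k, w k * dfun k * aim k ^ 2 := by
      rw [SISaux.weighted_quad K w dfun aim, ← hSdef]
    have hb1 := SISaux.key_quad_bound S hS hPSD hSrow hcard2 lam2 hlam2
      (fun k => w k * dfun k) (fun k => mul_nonneg (hwpos k).le (hdnn k)) hTpos are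
    have hb2 := SISaux.key_quad_bound S hS hPSD hSrow hcard2 lam2 hlam2
      (fun k => w k * dfun k) (fun k => mul_nonneg (hwpos k).le (hdnn k)) hTpos aim
    set P : ℝ := ∑ k, w k * Complex.normSq (u k) with hP
    have hPpos : 0 < P := by
      have hknz : ∃ k, u k ≠ 0 := by
        by_contra hc
        push_neg at hc
        exact hu0 (funext fun k => hc k)
      obtain ⟨ku, hku⟩ := hknz
      rw [hP]
      refine Finset.sum_pos' (fun k _ => mul_nonneg (hwpos k).le (Complex.normSq_nonneg _)) ?_
      exact ⟨ku, Finset.mem_univ ku,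
        mul_pos (hwpos ku) (Complex.normSq_pos.mpr hku)⟩
    have hPle : P ≤ ∑ k, (are k ^ 2 + aim k ^ 2) := by
      rw [hP]
      refine Finset.sum_le_sum fun k _ => ?_
      have h1 : Complex.normSq (u k) = are k ^2 + aim k ^2 := by
        rw [Complex.normSq_apply, hare, haim]; ring
      rw [h1]
      have := hwle k
      nlinarith [sq_nonneg (are k), sq_nonneg (aim k)]
    have hchain : cc * P ≤ (-z - s).re * P := by
      have e1 : (-z-s).re * P = (are ⬝ᵥ S *ᵥ are + ∑ k, w k * dfun k * are k ^ 2)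
          + (aim ⬝ᵥ S *ᵥ aim + ∑ k, w k * dfun k * aim k ^ 2) := by
        rw [hre, hq1, hq2]
      have e2 : cc * (∑ k, are k ^2) + cc * (∑ k, aim k ^ 2)
          ≤ (are ⬝ᵥ S *ᵥ are + ∑ k, w k * dfun k * are k ^ 2)
            + (aim ⬝ᵥ S *ᵥ aim + ∑ k, w k * dfun k * aim k ^ 2) := by
        rw [hcc]
        exact add_le_add hb1 hb2
      have e3 : cc * P ≤ cc * (∑ k, (are k ^2 + aim k ^2)) :=
        mul_le_mul_of_nonneg_left hPle hccnn
      rw [Finset.sum_add_distrib, mul_add] at e3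
      linarith [e1, e2, e3]
    have hzeta : -s ≤ (-z - s).re := by
      have := (mul_le_mul_iff_of_pos_right hPpos).mp hchain
      linarith [hsc]
    have : (-z - s).re = -z.re - s := by simp
    linarith [hzeta, this.symm.le]
  -- conclude
  refine Real.sSup_le ?_ le_rfl
  rintro y ⟨z, hz, rfl⟩
  exact hspec z hz
end

section
/- Consider the SIS model under multi-layer Markovian mobility, with F* = F(v), L* = L(v), M = I − F*, and fix the infection rates β_i > 0. Let w ≫ 0 be a left null vector of B M + L* normalized so max_k w_k = 1, W = diag(w), and λ₂ the second smallest eigenvalue of (1/2)(W(B M + L*) + (B M + L*)^⊤ W) (these depend only on B, M, L*, not on the recovery rates). Fix a patch i* ∈ {1,…,n} and a real number s with s > −λ₂/(4mn + 1) and β_{i*} + s ≥ 0. Then there exist recovery rates δ_i ≥ 0, i ∈ {1,…,n}, with δ_{i*} − β_{i*} = s = min_i(δ_i − β_i) and D − B − sI ≠ 0, such that λ₂ / ((1 + √(1 + λ₂/Σ_k w_k(δ_k − β_k − s)))² · nm + 1) + s ≥ 0, where the sum runs over all nm block-extended indices k. -/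
open Matrix Finset Filter

open SISMobility

private lemma sqrt_aux (r : ℝ) (hr : |r| ≤ 1 / 2) :
    Real.sqrt (1 + r) ≤ 2 ∧ |Real.sqrt (1 + r) - 1| ≤ |r| := by
  obtain ⟨hrl, hru⟩ := abs_le.mp hr
  have hrpos : (0:ℝ) ≤ 1 + r := by linarith
  set u : ℝ := Real.sqrt (1 + r) with hudef
  have hu0 : 0 ≤ u := Real.sqrt_nonneg _
  have hu2 : u ^ 2 = 1 + r := Real.sq_sqrt hrpos
  have hler : r ≤ |r| := le_abs_self _
  have hger : -|r| ≤ r := neg_abs_le _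
  have habs_r : 0 ≤ |r| := abs_nonneg _
  have huub : u ≤ 2 := by nlinarith [sq_nonneg (u - 2)]
  refine ⟨huub, abs_le.mpr ⟨?_, ?_⟩⟩
  · nlinarith
  · nlinarith

/-- Remark 1: fix the infection rates `β`, a patch `i*` and a real
`s` with `s > −λ₂/(4mn + 1)` and `β_{i*} + s ≥ 0`, where `w` and `λ₂` are determined
by `K = B M + L*` alone. Then there exist recovery rates `δ_i ≥ 0` with
`δ_{i*} − β_{i*} = s = min_i(δ_i − β_i)` and `D − B − sI ≠ 0` satisfying the `λ₂`
sufficient condition of Corollary 1 (iv). -/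
theorem lambda2_condition_satisfiable
    (n m : ℕ) (hn : 2 ≤ n) (hm : 1 ≤ m)
    (Q : Fin m → Matrix (Fin n) (Fin n) ℝ)
    (hQgen : ∀ α, IsGenerator (Q α)) (hQirr : ∀ α, StronglyConnected (Q α))
    (β : Fin n → ℝ) (hβ : ∀ i, 0 < β i)
    (vα : Fin m → Fin n → ℝ) (hvαpos : ∀ α i, 0 < vα α i)
    (hvαnorm : ∀ α, ∑ i, vα α i = 1)
    (hvαeig : ∀ α i, ∑ j, Q α j i * vα α j = 0)
    (Npop : Fin m → ℝ) (hNpop : ∀ α, 0 < Npop α)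
    (v : Idx n m → ℝ) (hv : ∀ k, v k = Npop k.1 * vα k.1 k.2)
    -- `K = B M + L*` with `M = I − F*` (independent of the recovery rates)
    (K : Matrix (Idx n m) (Idx n m) ℝ)
    (hK : K = Bmat n m β * (1 - Fmat v) + Lmat Q v)
    -- `w ≫ 0` left null vector of `K`, normalized so that `max_k w_k = 1`
    (w : Idx n m → ℝ) (hwpos : ∀ k, 0 < w k)
    (hwnull : Matrix.vecMul w K = 0)
    (hwle : ∀ k, w k ≤ 1) (hwmax : ∃ k, w k = 1)
    -- `λ₂` is the second smallest eigenvalue of `(1/2)(W K + Kᵀ W)`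
    (S : Matrix (Idx n m) (Idx n m) ℝ)
    (hSdef : S = (1 / 2 : ℝ) • (Matrix.diagonal w * K + Kᵀ * Matrix.diagonal w))
    (hS : S.IsHermitian)
    (lam2 : ℝ)
    (hlam2 : lam2 = (Multiset.sort (Finset.univ.val.map hS.eigenvalues) (· ≤ ·)).getD 1 0)
    -- fixed patch and value of the minimal recovery deficit
    (istar : Fin n) (s : ℝ)
    (hss : -lam2 / (4 * (m : ℝ) * n + 1) < s)
    (hβs : 0 ≤ β istar + s) :
    ∃ δ : Fin n → ℝ, (∀ i, 0 ≤ δ i) ∧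
      δ istar - β istar = s ∧ (∀ i, s ≤ δ i - β i) ∧
      Dmat n m δ - Bmat n m β - s • (1 : Matrix (Idx n m) (Idx n m) ℝ) ≠ 0 ∧
      0 ≤ lam2 /
          ((1 + Real.sqrt (1 + lam2 / ∑ k : Idx n m, w k * (δ k.2 - β k.2 - s))) ^ 2
            * (n * m : ℝ) + 1) + s := by

  -- basic positivity facts
  have hmn1 : (0:ℝ) < 4 * (m : ℝ) * n + 1 := by
    have : (1:ℝ) ≤ (m:ℝ) := by exact_mod_cast hm
    have : (2:ℝ) ≤ (n:ℝ) := by exact_mod_cast hn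
    nlinarith [Nat.cast_nonneg (α := ℝ) m, Nat.cast_nonneg (α := ℝ) n]
  have hnm : (0:ℝ) < (n:ℝ) * (m:ℝ) := by
    have h1 : (1:ℝ) ≤ (m:ℝ) := by exact_mod_cast hm
    have h2 : (2:ℝ) ≤ (n:ℝ) := by exact_mod_cast hn
    nlinarith
  -- ε := lam2 + s * (4mn+1) > 0
  have hεpos : 0 < lam2 + s * (4 * (m : ℝ) * n + 1) := by
    rw [div_lt_iff₀ hmn1] at hss
    linarith
  -- a patch different from istar, and a class
  have hnt : Nontrivial (Fin n) := Fin.nontrivial_iff_two_le.mpr hn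
  obtain ⟨j, hj⟩ := exists_ne istar
  have hm0 : 0 < m := hm
  set α0 : Fin m := ⟨0, hm0⟩ with hα0
  -- W' = sum of w over indices with patch ≠ istar
  set W' : ℝ := ∑ k ∈ Finset.univ.filter (fun k : Idx n m => ¬ k.2 = istar), w k with hW'def
  have hW' : 0 < W' := by
    apply Finset.sum_pos
    · intro k _; exact hwpos k
    · exact ⟨(α0, j), by simp [hj]⟩
  -- the constant c
  set c : ℝ := |s| + 1 + 2 * |lam2| / W' +
      5 * ((n:ℝ) * m) * |lam2| * (|s| + 1) / ((lam2 + s * (4 * (m : ℝ) * n + 1)) * W')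
    with hcdef
  have ht1 : 0 ≤ 2 * |lam2| / W' := by positivity
  have ht2 : 0 ≤ 5 * ((n:ℝ) * m) * |lam2| * (|s| + 1) /
      ((lam2 + s * (4 * (m : ℝ) * n + 1)) * W') := by
    apply div_nonneg
    · positivity
    · exact (mul_pos hεpos hW').le
  have hc0 : 0 < c := by
    have : 0 ≤ |s| := abs_nonneg s
    rw [hcdef]; linarith
  have hcs : -s ≤ c := by
    have : -s ≤ |s| := neg_le_abs s
    rw [hcdef]; linarith
  refine ⟨fun i => β i + s + (if i = istar then 0 else c), ?_, ?_, ?_, ?_, ?_⟩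
  · intro i
    by_cases h : i = istar
    · simp [h]; linarith [hβs]
    · simp [h]; nlinarith [hβ i, hcs]
  · simp
  · intro i
    by_cases h : i = istar <;> simp [h] <;> linarith
  · intro h0
    have he := congrFun (congrFun h0 (α0, j)) (α0, j)
    simp [Dmat, Bmat, Matrix.sub_apply, Matrix.smul_apply, Matrix.one_apply_eq,
      Matrix.diagonal_apply_eq, hj] at he
    linarith
  · -- the main inequality
    have hsum : (∑ k : Idx n m,
        w k * ((β k.2 + s + (if k.2 = istar then 0 else c)) - β k.2 - s)) = c * W' := by
      have h1 : ∀ k : Idx n m,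
          w k * ((β k.2 + s + (if k.2 = istar then 0 else c)) - β k.2 - s)
            = if ¬ k.2 = istar then c * w k else 0 := by
        intro k; by_cases h : k.2 = istar <;> simp [h] <;> ring
      rw [Finset.sum_congr rfl (fun k _ => h1 k), ← Finset.sum_filter, hW'def,
        Finset.mul_sum]
    simp only [hsum]
    set P : ℝ := c * W' with hPdef
    have hP : 0 < P := mul_pos hc0 hW'
    -- |lam2| ≤ P/2
    have h2P : 2 * |lam2| ≤ P := by
      have : 2 * |lam2| / W' ≤ c := by rw [hcdef]; linarith [abs_nonneg s]
      calc 2 * |lam2| = (2 * |lam2| / W') * W' := by field_simp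
        _ ≤ c * W' := mul_le_mul_of_nonneg_right this hW'.le
    have h5 : 5 * ((n:ℝ) * m) * |lam2| * (|s| + 1)
        ≤ (lam2 + s * (4 * (m : ℝ) * n + 1)) * P := by
      have hd : 0 < (lam2 + s * (4 * (m : ℝ) * n + 1)) * W' := mul_pos hεpos hW'
      have h6 : 5 * ((n:ℝ) * m) * |lam2| * (|s| + 1) /
          ((lam2 + s * (4 * (m : ℝ) * n + 1)) * W') ≤ c := by
        rw [hcdef]; linarith [abs_nonneg s]
      have := (div_le_iff₀ hd).mp h6
      calc 5 * ((n:ℝ) * m) * |lam2| * (|s| + 1)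
          ≤ c * ((lam2 + s * (4 * (m : ℝ) * n + 1)) * W') := this
        _ = (lam2 + s * (4 * (m : ℝ) * n + 1)) * P := by rw [hPdef]; ring
    -- bounds on r = lam2 / P
    have hrabs : |lam2 / P| ≤ 1 / 2 := by
      rw [abs_div, abs_of_pos hP, div_le_iff₀ hP]
      linarith
    obtain ⟨hrl, hru⟩ := abs_le.mp hrabs
    have hrpos : (0:ℝ) < 1 + lam2 / P := by linarith
    set u : ℝ := Real.sqrt (1 + lam2 / P) with hudef
    have hu0 : 0 ≤ u := Real.sqrt_nonneg _
    obtain ⟨huub, habs⟩ := sqrt_aux (lam2 / P) hrabs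
    -- bound the perturbation term
    have hX : |s * ((n:ℝ) * m) * ((1 + u) ^ 2 - 4)|
        ≤ lam2 + s * (4 * (m : ℝ) * n + 1) := by
      have h1 : |(1 + u) ^ 2 - 4| ≤ 5 * |lam2 / P| := by
        have he : (1 + u) ^ 2 - 4 = (u - 1) * (u + 3) := by ring
        rw [he, abs_mul, abs_of_pos (show (0:ℝ) < u + 3 by linarith)]
        calc |u - 1| * (u + 3) ≤ |lam2 / P| * 5 :=
              mul_le_mul habs (by linarith) (by linarith) (abs_nonneg _)
          _ = 5 * |lam2 / P| := by ring
      have h2 : |s * ((n:ℝ) * m) * ((1 + u) ^ 2 - 4)|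
          = |s| * ((n:ℝ) * m) * |(1 + u) ^ 2 - 4| := by
        rw [abs_mul, abs_mul, abs_of_pos hnm]
      rw [h2]
      have h3 : |s| * ((n:ℝ) * m) * |(1 + u) ^ 2 - 4|
          ≤ |s| * ((n:ℝ) * m) * (5 * |lam2 / P|) := by
        apply mul_le_mul_of_nonneg_left h1
        positivity
      have h4 : |s| * ((n:ℝ) * m) * (5 * |lam2 / P|)
          ≤ lam2 + s * (4 * (m : ℝ) * n + 1) := by
        have hra : |lam2 / P| = |lam2| / P := by rw [abs_div, abs_of_pos hP]
        rw [hra]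
        rw [show |s| * ((n:ℝ) * m) * (5 * (|lam2| / P))
            = 5 * ((n:ℝ) * m) * |lam2| * |s| / P from by ring]
        rw [div_le_iff₀ hP]
        have h8 : 0 ≤ 5 * ((n:ℝ) * m) * |lam2| := by positivity
        linarith
      linarith
    -- conclude
    have hD : (0:ℝ) < (1 + u) ^ 2 * ((n:ℝ) * (m:ℝ)) + 1 := by positivity
    have key : 0 ≤ lam2 + s * ((1 + u) ^ 2 * ((n:ℝ) * (m:ℝ)) + 1) := by
      have hexp : lam2 + s * ((1 + u) ^ 2 * ((n:ℝ) * (m:ℝ)) + 1)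
          = (lam2 + s * (4 * (m : ℝ) * n + 1))
            + s * ((n:ℝ) * m) * ((1 + u) ^ 2 - 4) := by ring
      rw [hexp]
      have := neg_abs_le (s * ((n:ℝ) * m) * ((1 + u) ^ 2 - 4))
      linarith
    rw [div_add' _ _ _ hD.ne']
    exact div_nonneg key hD.le
end

section
/- Let N ≥ 2 and let L ∈ ℝ^{N×N} be an irreducible Laplacian matrix, i.e., its off-diagonal entries are nonpositive, each row of L sums to zero, and the digraph on {1,…,N} with an edge (i,j) whenever i ≠ j and L_{ij} ≠ 0 is strongly connected. Let Δ ∈ ℝ^{N×N} be a nonnegative diagonal matrix with at least one strictly positive diagonal entry. Then every eigenvalue of L + Δ has strictly positive real part; in particular L + Δ is invertible and (L + Δ)^{-1} is entrywise positive. -/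
open Matrix Finset Filter

open SISMobility

private lemma key_step {N : ℕ} (A : Matrix (Fin N) (Fin N) ℝ) (Δ : Fin N → ℝ)
    (hoff : ∀ i j, i ≠ j → A i j ≤ 0)
    (hrow : ∀ i, ∑ j, A i j = Δ i) (hΔ : ∀ i, 0 ≤ Δ i)
    (u : Fin N → ℝ) (m : ℝ) (hm : m ≤ 0) (hmin : ∀ k, m ≤ u k)
    (hw : ∀ i, 0 ≤ A.mulVec u i)
    (i : Fin N) (hi : u i = m) :
    A.mulVec u i = 0 ∧ m * Δ i = 0 ∧ ∀ k, A i k ≠ 0 → u k = m := by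
  have hterm : ∀ k : Fin N, A i k * (u k - m) ≤ 0 := by
    intro k
    by_cases hk : k = i
    · subst hk; rw [hi]; simp
    · have h1 := hoff i k (fun h => hk h.symm)
      have h2 : 0 ≤ u k - m := by linarith [hmin k]
      nlinarith
  have hmv : A.mulVec u i = (∑ k, A i k * (u k - m)) + m * Δ i := by
    have h : ∑ k, A i k * (u k - m) = (∑ k, A i k * u k) - (∑ k, A i k) * m := by
      rw [Finset.sum_mul, ← Finset.sum_sub_distrib]
      congr 1; funext k; ring
    rw [Matrix.mulVec, dotProduct, h, hrow i]; ring
  have hT : (∑ k, A i k * (u k - m)) ≤ 0 :=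
    Finset.sum_nonpos (fun k _ => hterm k)
  have hmd : m * Δ i ≤ 0 := by nlinarith [hΔ i]
  have h0 := hw i
  rw [hmv] at h0
  have hT0 : (∑ k, A i k * (u k - m)) = 0 := le_antisymm hT (by linarith)
  have hmd0 : m * Δ i = 0 := le_antisymm hmd (by linarith)
  refine ⟨by rw [hmv, hT0, hmd0]; ring, hmd0, ?_⟩
  intro k hk
  have hz := (Finset.sum_eq_zero_iff_of_nonpos (fun k _ => hterm k)).1 hT0 k (Finset.mem_univ k)
  rcases mul_eq_zero.1 hz with h | h
  · exact absurd h hk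
  · linarith

private lemma key_all {N : ℕ} (A : Matrix (Fin N) (Fin N) ℝ) (Δ : Fin N → ℝ)
    (hoff : ∀ i j, i ≠ j → A i j ≤ 0)
    (hrow : ∀ i, ∑ j, A i j = Δ i) (hΔ : ∀ i, 0 ≤ Δ i)
    (hirr : ∀ i j : Fin N, Relation.ReflTransGen (fun a b => a ≠ b ∧ A a b ≠ 0) i j)
    (u : Fin N → ℝ) (m : ℝ) (hm : m ≤ 0) (hmin : ∀ k, m ≤ u k)
    (hw : ∀ i, 0 ≤ A.mulVec u i)
    (i0 : Fin N) (hi0 : u i0 = m) :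
    ∀ j, u j = m ∧ A.mulVec u j = 0 ∧ m * Δ j = 0 := by
  have hall : ∀ j, u j = m := by
    intro j
    induction hirr i0 j with
    | refl => exact hi0
    | tail _ hbc ih =>
      exact (key_step A Δ hoff hrow hΔ u m hm hmin hw _ ih).2.2 _ hbc.2
  intro j
  obtain ⟨h1, h2, _⟩ := key_step A Δ hoff hrow hΔ u m hm hmin hw j (hall j)
  exact ⟨hall j, h1, h2⟩

/-- an irreducible Laplacian matrix perturbed by a nonnegative
diagonal matrix with at least one positive entry is a nonsingular M-matrix: every
eigenvalue has strictly positive real part, the matrix is invertible, and its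
inverse is entrywise positive. -/
theorem perturbed_irreducible_laplacian_M_matrix
    (N : ℕ) (hN : 2 ≤ N) (L : Matrix (Fin N) (Fin N) ℝ)
    (hLoff : ∀ i j, i ≠ j → L i j ≤ 0)
    (hLrow : ∀ i, ∑ j, L i j = 0)
    (hLirr : ∀ i j : Fin N, Relation.ReflTransGen (fun a b => a ≠ b ∧ L a b ≠ 0) i j)
    (Δ : Fin N → ℝ) (hΔ : ∀ i, 0 ≤ Δ i) (hΔpos : ∃ i, 0 < Δ i) :
    (∀ z ∈ spectrum ℂ ((L + Matrix.diagonal Δ).map (algebraMap ℝ ℂ)), 0 < z.re) ∧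
    IsUnit (L + Matrix.diagonal Δ).det ∧
    (∀ i j, 0 < (L + Matrix.diagonal Δ)⁻¹ i j) := by
  set A : Matrix (Fin N) (Fin N) ℝ := L + Matrix.diagonal Δ with hA
  have hne : (Finset.univ : Finset (Fin N)).Nonempty :=
    ⟨⟨0, by omega⟩, Finset.mem_univ _⟩
  obtain ⟨iΔ, hiΔ⟩ := hΔpos
  have hAeq : ∀ a b : Fin N, a ≠ b → A a b = L a b := by
    intro a b hab
    simp [hA, Matrix.add_apply, Matrix.diagonal_apply_ne _ hab]
  have hAoff : ∀ i j, i ≠ j → A i j ≤ 0 := fun i j h => (hAeq i j h) ▸ hLoff i j h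
  have hArow : ∀ i, ∑ j, A i j = Δ i := by
    intro i
    have : ∑ j, A i j = (∑ j, L i j) + ∑ j, Matrix.diagonal Δ i j := by
      simp [hA, Matrix.add_apply, Finset.sum_add_distrib]
    rw [this, hLrow i, zero_add]
    simp [Matrix.diagonal_apply]
  have hAirr : ∀ i j : Fin N,
      Relation.ReflTransGen (fun a b => a ≠ b ∧ A a b ≠ 0) i j := by
    intro i j
    exact Relation.ReflTransGen.mono (fun a b hab => ⟨hab.1, by rw [hAeq a b hab.1]; exact hab.2⟩) i j (hLirr i j)
  -- trivial kernel
  have hker : ∀ v : Fin N → ℝ, A.mulVec v = 0 → v = 0 := by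
    intro v hv
    obtain ⟨i0, -, hmin⟩ := Finset.exists_min_image Finset.univ v hne
    obtain ⟨i1, -, hmax⟩ := Finset.exists_max_image Finset.univ v hne
    have hz : ∀ i, 0 ≤ A.mulVec v i := by intro i; rw [hv]; simp
    have hv0 : ∀ j, 0 ≤ v j := by
      by_contra hcon
      push_neg at hcon
      obtain ⟨j, hj⟩ := hcon
      have hm : v i0 ≤ 0 := le_trans (hmin j (Finset.mem_univ _)) hj.le
      have hk := key_all A Δ hAoff hArow hΔ hAirr v (v i0) hm
        (fun k => hmin k (Finset.mem_univ _)) hz i0 rfl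
      have h1 := (hk iΔ).2.2
      have h2 := (hk j).1
      nlinarith
    have hz' : ∀ i, 0 ≤ A.mulVec (-v) i := by
      intro i; rw [Matrix.mulVec_neg, hv]; simp
    have hk := key_all A Δ hAoff hArow hΔ hAirr (-v) (-(v i1))
      (neg_nonpos.2 (hv0 i1)) (fun k => neg_le_neg (hmax k (Finset.mem_univ _))) hz' i1 rfl
    have h1 := (hk iΔ).2.2
    have hvi1 : v i1 = 0 := by nlinarith
    funext j
    have h2 := (hk j).1
    simp only [Pi.neg_apply, Pi.zero_apply] at h2 ⊢
    rw [hvi1] at h2; linarith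
  have hdet : A.det ≠ 0 := by
    intro h
    obtain ⟨v, hv0, hv⟩ := Matrix.exists_mulVec_eq_zero_iff.2 h
    exact hv0 (hker v hv)
  have hdetU : IsUnit A.det := isUnit_iff_ne_zero.2 hdet
  refine ⟨?_, hdetU, ?_⟩
  · -- spectrum part
    intro z hz
    rw [spectrum.mem_iff] at hz
    set M : Matrix (Fin N) (Fin N) ℂ := A.map (algebraMap ℝ ℂ) with hM
    have hdetC : ((algebraMap ℂ (Matrix (Fin N) (Fin N) ℂ)) z - M).det = 0 := by
      by_contra h
      exact hz ((Matrix.isUnit_iff_isUnit_det _).2 (isUnit_iff_ne_zero.2 h))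
    obtain ⟨v, hv0, hveq⟩ := Matrix.exists_mulVec_eq_zero_iff.2 hdetC
    have hMv : M.mulVec v = z • v := by
      have h1 : (algebraMap ℂ (Matrix (Fin N) (Fin N) ℂ) z).mulVec v = z • v := by
        rw [Algebra.algebraMap_eq_smul_one, Matrix.smul_mulVec, Matrix.one_mulVec]
      rw [Matrix.sub_mulVec, h1] at hveq
      have := sub_eq_zero.1 hveq
      exact this.symm
    obtain ⟨i, -, hmax⟩ := Finset.exists_max_image Finset.univ (fun k => ‖v k‖) hne
    have hvi : 0 < ‖v i‖ := by
      rcases Function.ne_iff.1 hv0 with ⟨k, hk⟩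
      have h1 : 0 < ‖v k‖ := by
        simpa [norm_pos_iff] using hk
      exact lt_of_lt_of_le h1 (hmax k (Finset.mem_univ _))
    have hrowEq : ∑ k, ((A i k : ℂ)) * v k = z * v i := by
      have h := congrFun hMv i
      simpa [Matrix.mulVec, dotProduct, Matrix.map_apply, Pi.smul_apply,
        smul_eq_mul, hM] using h
    have hsplit : (z - (A i i : ℂ)) * v i = ∑ k ∈ Finset.univ.erase i, (A i k : ℂ) * v k := by
      have h := Finset.add_sum_erase Finset.univ (fun k => (A i k : ℂ) * v k)
        (Finset.mem_univ i)
      have : ∑ k ∈ Finset.univ.erase i, (A i k : ℂ) * v k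
          = (∑ k, (A i k : ℂ) * v k) - (A i i : ℂ) * v i := by
        rw [← h]; ring
      rw [this, hrowEq]; ring
    have hsumoff : ∑ k ∈ Finset.univ.erase i, (-(A i k)) = A i i - Δ i := by
      have h := Finset.add_sum_erase Finset.univ (fun k => A i k) (Finset.mem_univ i)
      rw [hArow i] at h
      have : ∑ k ∈ Finset.univ.erase i, A i k = Δ i - A i i := by linarith
      rw [Finset.sum_neg_distrib, this]; ring
    have hΔa : Δ i ≤ A i i := by
      have h := Finset.sum_nonpos (s := Finset.univ.erase i)
        (f := fun k => A i k) (fun k hk => hAoff i k (Ne.symm (Finset.ne_of_mem_erase hk)))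
      have h2 := Finset.add_sum_erase Finset.univ (fun k => A i k) (Finset.mem_univ i)
      rw [hArow i] at h2
      linarith
    have habs : ‖z - (A i i : ℂ)‖ * ‖v i‖
        ≤ (A i i - Δ i) * ‖v i‖ := by
      rw [← norm_mul, hsplit]
      calc ‖∑ k ∈ Finset.univ.erase i, (A i k : ℂ) * v k‖
          ≤ ∑ k ∈ Finset.univ.erase i, ‖(A i k : ℂ) * v k‖ :=
            norm_sum_le _ _
        _ ≤ ∑ k ∈ Finset.univ.erase i, (-(A i k)) * ‖v i‖ := by
            apply Finset.sum_le_sum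
            intro k hk
            have hki : k ≠ i := Finset.ne_of_mem_erase hk
            have hik : A i k ≤ 0 := hAoff i k (Ne.symm hki)
            rw [norm_mul, Complex.norm_real, Real.norm_eq_abs, abs_of_nonpos hik]
            exact mul_le_mul_of_nonneg_left (hmax k (Finset.mem_univ _)) (by linarith)
        _ = (A i i - Δ i) * ‖v i‖ := by
            rw [← Finset.sum_mul, hsumoff]
    have hZA : ‖z - (A i i : ℂ)‖ ≤ A i i - Δ i :=
      le_of_mul_le_mul_right habs hvi
    by_contra hcon
    push_neg at hcon
    have h2 : (z.re - A i i)^2 + z.im^2 ≤ (A i i - Δ i)^2 := by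
      have hnn := norm_nonneg (z - (A i i : ℂ))
      have hsq := mul_self_le_mul_self hnn hZA
      have h3 := Complex.sq_norm (z - (A i i : ℂ))
      rw [Complex.normSq_apply] at h3
      simp only [Complex.sub_re, Complex.sub_im, Complex.ofReal_re, Complex.ofReal_im,
        sub_zero] at h3
      nlinarith [h3, hsq]
    have ha0 : 0 ≤ A i i := le_trans (hΔ i) hΔa
    have hx2 : z.re^2 + z.im^2 ≤ 0 := by
      nlinarith [mul_nonneg (hΔ i) (by linarith : (0:ℝ) ≤ 2 * A i i - Δ i),
        mul_nonneg ha0 (by linarith : (0:ℝ) ≤ -z.re)]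
    have hzre : z.re = 0 := by nlinarith [sq_nonneg z.re, sq_nonneg z.im]
    have hzim : z.im = 0 := by nlinarith [sq_nonneg z.re, sq_nonneg z.im]
    have hz0 : z = 0 := Complex.ext hzre hzim
    rw [hz0] at hdetC
    rw [map_zero, zero_sub, Matrix.det_neg] at hdetC
    have hdM : M.det = ((A.det : ℂ)) := by
      rw [hM]
      simpa [RingHom.mapMatrix_apply] using (RingHom.map_det (algebraMap ℝ ℂ) A).symm
    rcases mul_eq_zero.1 hdetC with h | h
    · exact pow_ne_zero _ (by norm_num : (-1 : ℂ) ≠ 0) h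
    · rw [hdM] at h
      exact hdet (by exact_mod_cast h)
  · -- inverse positivity
    intro r j
    set u : Fin N → ℝ := fun k => A⁻¹ k j with hu_def
    have hu : ∀ i', A.mulVec u i' = (1 : Matrix (Fin N) (Fin N) ℝ) i' j := by
      intro i'
      have h := Matrix.mul_nonsing_inv A hdetU
      calc A.mulVec u i' = (A * A⁻¹) i' j := by
            simp [Matrix.mulVec, dotProduct, Matrix.mul_apply, hu_def]
        _ = (1 : Matrix (Fin N) (Fin N) ℝ) i' j := by rw [h]
    have hnn : ∀ i', 0 ≤ A.mulVec u i' := by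
      intro i'
      rw [hu i']
      by_cases h : i' = j <;> simp [Matrix.one_apply, h]
    by_contra hcon
    push_neg at hcon
    obtain ⟨i0, -, hminu⟩ := Finset.exists_min_image Finset.univ u hne
    have hm0 : u i0 ≤ 0 := le_trans (hminu r (Finset.mem_univ _)) hcon
    have hk := key_all A Δ hAoff hArow hΔ hAirr u (u i0) hm0
      (fun k => hminu k (Finset.mem_univ _)) hnn i0 rfl
    have h1 := (hk j).2.1
    rw [hu j] at h1
    simp [Matrix.one_apply] at h1
end

section
/- Consider the SIS model under multi-layer Markovian mobility, with F* = F(v) and L* = L(v), and assume δ_i > 0 for at least one patch i. Then L* + D is invertible, the matrix A = (L* + D)^{-1} B is block-diagonal with each n×n diagonal block entrywise positive, and the product A F* is entrywise positive (in particular, A F* is an irreducible nonnegative matrix). -/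
open Matrix Finset Filter

open SISMobility

section SISAux
attribute [local instance] Matrix.linftyOpNormedRing Matrix.linftyOpNormedAlgebra


variable {n : ℕ}

lemma SIS_entry_le_norm (M : Matrix (Fin n) (Fin n) ℝ) (i j : Fin n) : |M i j| ≤ ‖M‖ := by
  rw [Matrix.linfty_opNorm_def]
  calc |M i j| = ‖M i j‖ := rfl
  _ ≤ ∑ k, ‖M i k‖ := Finset.single_le_sum (fun k _ => norm_nonneg _) (Finset.mem_univ j)
  _ = ((∑ k, ‖M i k‖₊ : NNReal) : ℝ) := by push_cast; rfl
  _ ≤ _ := by exact_mod_cast Finset.le_sup (f := fun i => ∑ j, ‖M i j‖₊) (Finset.mem_univ i)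

lemma SIS_norm_le_of_rows (M : Matrix (Fin n) (Fin n) ℝ) (c : ℝ) (hc : 0 ≤ c)
    (h : ∀ i, ∑ j, |M i j| ≤ c) : ‖M‖ ≤ c := by
  rw [Matrix.linfty_opNorm_def]
  have : (Finset.univ.sup fun i => ∑ j, ‖M i j‖₊) ≤ (⟨c, hc⟩ : NNReal) := by
    apply Finset.sup_le
    intro i _
    refine NNReal.coe_le_coe.1 ?_
    push_cast
    exact h i
  exact_mod_cast this

noncomputable def SISentryHom (i j : Fin n) : Matrix (Fin n) (Fin n) ℝ →+ ℝ :=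
  { toFun := fun M => M i j, map_zero' := rfl, map_add' := fun _ _ => rfl }

lemma SISentryHom_continuous (i j : Fin n) : Continuous (SISentryHom (n := n) i j) := by
  apply (LipschitzWith.mk_one ?_).continuous
  intro M N
  rw [dist_eq_norm, dist_eq_norm]
  calc ‖SISentryHom i j M - SISentryHom i j N‖ = |(M - N) i j| := rfl
  _ ≤ ‖M - N‖ := SIS_entry_le_norm _ _ _

lemma SIS_Mkey (hn : 0 < n) (M : Matrix (Fin n) (Fin n) ℝ)
    (hoff : ∀ i j, i ≠ j → M i j ≤ 0)
    (hrow : ∀ i, 0 ≤ ∑ j, M i j)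
    (hrow0 : ∃ i, 0 < ∑ j, M i j)
    (hirr : ∀ i j, Relation.ReflTransGen (fun a b => a ≠ b ∧ M a b < 0) i j) :
    ∃ N : Matrix (Fin n) (Fin n) ℝ, M * N = 1 ∧ N * M = 1 ∧ ∀ i j, 0 < N i j := by
  have hdiag : ∀ i, 0 ≤ M i i := by
    intro i
    have h1 : ∑ j ∈ Finset.univ.filter (· ≠ i), M i j ≤ 0 :=
      Finset.sum_nonpos fun j hj => hoff i j (Ne.symm (by simpa using (Finset.mem_filter.1 hj).2))
    have h2 : ∑ j, M i j = M i i + ∑ j ∈ Finset.univ.filter (· ≠ i), M i j := by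
      rw [Finset.filter_ne']
      exact (Finset.add_sum_erase Finset.univ (M i) (Finset.mem_univ i)).symm
    nlinarith [hrow i]
  set s : ℝ := 1 + ∑ i, M i i with hs_def
  have hs1 : 1 ≤ s := by
    have : 0 ≤ ∑ i, M i i := Finset.sum_nonneg fun i _ => hdiag i
    linarith
  have hspos : 0 < s := by linarith
  have hsd : ∀ i, M i i < s := by
    intro i
    have : M i i ≤ ∑ k, M k k := Finset.single_le_sum (fun k _ => hdiag k) (Finset.mem_univ i)
    linarith
  set P : Matrix (Fin n) (Fin n) ℝ := 1 - s⁻¹ • M with hP_def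
  have hPapply : ∀ i j, P i j = (if i = j then (1:ℝ) else 0) - s⁻¹ * M i j := by
    intro i j
    simp [hP_def, Matrix.sub_apply, Matrix.one_apply, Matrix.smul_apply, smul_eq_mul]
  have hPnonneg : ∀ i j, 0 ≤ P i j := by
    intro i j
    rw [hPapply]
    rcases eq_or_ne i j with rfl | h
    · rw [if_pos rfl]
      have hd := hsd i
      have h2 : s⁻¹ * M i i < 1 := by
        rw [inv_mul_lt_iff₀ hspos]; linarith
      linarith
    · rw [if_neg h]
      have h1 := hoff i j h
      have h3 : (0:ℝ) ≤ s⁻¹ := le_of_lt (by positivity)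
      nlinarith
  have hPdiag : ∀ i, 0 < P i i := by
    intro i
    rw [hPapply, if_pos rfl]
    have h2 : s⁻¹ * M i i < 1 := by
      rw [inv_mul_lt_iff₀ hspos]; linarith [hsd i]
    linarith
  have hPoff : ∀ i j, i ≠ j → M i j < 0 → 0 < P i j := by
    intro i j h hm
    rw [hPapply]
    simp only [if_neg h]
    have : 0 < -(s⁻¹ * M i j) := by
      have : 0 < s⁻¹ := by positivity
      nlinarith
    linarith
  have hProw : ∀ i, ∑ j, P i j = 1 - s⁻¹ * ∑ j, M i j := by
    intro i
    simp only [hPapply, Finset.sum_sub_distrib, Finset.sum_ite_eq, Finset.mem_univ, if_pos,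
      Finset.mul_sum]
  have hProw_le : ∀ i, ∑ j, P i j ≤ 1 := by
    intro i
    rw [hProw]
    have : 0 ≤ s⁻¹ * ∑ j, M i j := by
      have := hrow i
      positivity
    linarith
  obtain ⟨i₀, hi₀⟩ := hrow0
  have hProw_lt : ∑ j, P i₀ j < 1 := by
    rw [hProw]
    have : 0 < s⁻¹ * ∑ j, M i₀ j := by positivity
    linarith
  -- powers are nonnegative
  have powNonneg : ∀ k i j, 0 ≤ (P ^ k) i j := by
    intro k
    induction k with
    | zero =>
      intro i j
      rw [pow_zero, Matrix.one_apply]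
      split <;> norm_num
    | succ k ih =>
      intro i j
      rw [pow_succ, Matrix.mul_apply]
      exact Finset.sum_nonneg fun l _ => mul_nonneg (ih i l) (hPnonneg l j)
  have powRow : ∀ k i, ∑ j, (P ^ k) i j ≤ 1 := by
    intro k
    induction k with
    | zero => intro i; simp [Matrix.one_apply]
    | succ k ih =>
      intro i
      rw [pow_succ]
      have : ∑ j, (P ^ k * P) i j = ∑ l, (P ^ k) i l * ∑ j, P l j := by
        simp only [Matrix.mul_apply, Finset.mul_sum]
        rw [Finset.sum_comm]
      rw [this]
      calc ∑ l, (P ^ k) i l * ∑ j, P l j ≤ ∑ l, (P ^ k) i l * 1 :=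
            Finset.sum_le_sum fun l _ => mul_le_mul_of_nonneg_left (hProw_le l) (powNonneg k i l)
      _ = ∑ l, (P ^ k) i l := by simp
      _ ≤ 1 := ih i
  have powStep : ∀ k i j, 0 < (P ^ k) i j → 0 < (P ^ (k+1)) i j := by
    intro k i j h
    rw [pow_succ, Matrix.mul_apply]
    have hterm : 0 < (P ^ k) i j * P j j := mul_pos h (hPdiag j)
    calc (0:ℝ) < (P ^ k) i j * P j j := hterm
    _ ≤ ∑ l, (P ^ k) i l * P l j :=
        Finset.single_le_sum (f := fun l => (P ^ k) i l * P l j)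
          (fun l _ => mul_nonneg (powNonneg k i l) (hPnonneg l j)) (Finset.mem_univ j)
  have powMono : ∀ i j k k', k ≤ k' → 0 < (P ^ k) i j → 0 < (P ^ k') i j := by
    intro i j k k' hle h
    induction k' , hle using Nat.le_induction with
    | base => exact h
    | succ k' hk ih => exact powStep k' i j ih
  have reach : ∀ i j, ∃ k, 0 < (P ^ k) i j := by
    intro i j
    induction hirr i j with
    | refl => exact ⟨0, by simp [Matrix.one_apply]⟩
    | tail hab hbc ih =>
      obtain ⟨k, hk⟩ := ih
      rename_i b c
      refine ⟨k + 1, ?_⟩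
      rw [pow_succ, Matrix.mul_apply]
      have hedge : 0 < P b c := hPoff b c hbc.1 hbc.2
      calc (0:ℝ) < (P ^ k) i b * P b c := mul_pos hk hedge
      _ ≤ ∑ l, (P ^ k) i l * P l c :=
          Finset.single_le_sum (f := fun l => (P ^ k) i l * P l c)
            (fun l _ => mul_nonneg (powNonneg k i l) (hPnonneg l c)) (Finset.mem_univ b)
  -- a uniform power
  choose g hg using fun p : Fin n × Fin n => reach p.1 p.2
  set N₀ : ℕ := Finset.univ.sup g with hN₀_def
  have hPN : ∀ i j, 0 < (P ^ N₀) i j := by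
    intro i j
    exact powMono i j (g (i,j)) N₀ (Finset.le_sup (Finset.mem_univ (i,j))) (hg (i,j))
  set T : Matrix (Fin n) (Fin n) ℝ := P ^ (N₀ + 1) with hT_def
  have hTnonneg : ∀ i j, 0 ≤ T i j := powNonneg (N₀ + 1)
  have hTrow : ∀ i, ∑ j, T i j < 1 := by
    intro i
    have expand : ∑ j, T i j = ∑ l, (P ^ N₀) i l * ∑ j, P l j := by
      rw [hT_def, pow_succ]
      simp only [Matrix.mul_apply, Finset.mul_sum]
      rw [Finset.sum_comm]
    rw [expand]
    calc ∑ l, (P ^ N₀) i l * ∑ j, P l j < ∑ l, (P ^ N₀) i l * 1 := by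
          apply Finset.sum_lt_sum
          · exact fun l _ => mul_le_mul_of_nonneg_left (hProw_le l) (powNonneg N₀ i l)
          · exact ⟨i₀, Finset.mem_univ i₀, by
              have := hPN i i₀
              nlinarith [hProw_lt]⟩
    _ = ∑ l, (P ^ N₀) i l := by simp
    _ ≤ 1 := powRow N₀ i
  have hTnorm : ‖T‖ < 1 := by
    have hne : (Finset.univ : Finset (Fin n)).Nonempty := Finset.univ_nonempty_iff.2 ⟨⟨0, hn⟩⟩
    set c : ℝ := Finset.univ.sup' hne (fun i => ∑ j, T i j) with hc_def
    have hcmem : ∃ i, c = ∑ j, T i j := by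
      obtain ⟨i, _, hi⟩ := Finset.exists_mem_eq_sup' hne (fun i => ∑ j, T i j)
      exact ⟨i, hi⟩
    obtain ⟨ic, hic⟩ := hcmem
    have hc1 : c < 1 := hic ▸ hTrow ic
    have hc0 : 0 ≤ c := hic ▸ Finset.sum_nonneg fun j _ => hTnonneg ic j
    have : ‖T‖ ≤ c := by
      apply SIS_norm_le_of_rows T c hc0
      intro i
      have : ∑ j, |T i j| = ∑ j, T i j := by
        apply Finset.sum_congr rfl
        intro j _
        exact abs_of_nonneg (hTnonneg i j)
      rw [this]
      exact Finset.le_sup' (fun i => ∑ j, T i j) (Finset.mem_univ i)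
    linarith
  -- Neumann series
  set R : Matrix (Fin n) (Fin n) ℝ := ∑' k, T ^ k with hR_def
  have hMul : (1 - T) * R = 1 := mul_neg_geom_series T hTnorm
  have hMul2 : R * (1 - T) = 1 := geom_series_mul_neg T hTnorm
  have hRsum : HasSum (fun k => T ^ k) R := (summable_geometric_of_norm_lt_one hTnorm).hasSum
  have hRentry : ∀ i j, HasSum (fun k => (T ^ k) i j) (R i j) := by
    intro i j
    exact hRsum.map (SISentryHom i j) (SISentryHom_continuous i j)
  have hTpowNonneg : ∀ k i j, 0 ≤ (T ^ k) i j := by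
    intro k i j
    rw [hT_def, ← pow_mul]
    exact powNonneg _ i j
  have hRnonneg : ∀ i j, 0 ≤ R i j := by
    intro i j
    rw [← (hRentry i j).tsum_eq]
    exact tsum_nonneg fun k => hTpowNonneg k i j
  have hRdiag : ∀ j, (1:ℝ) ≤ R j j := by
    intro j
    have := le_hasSum (hRentry j j) 0 (fun k _ => hTpowNonneg k j j)
    simpa [Matrix.one_apply] using this
  set S : Matrix (Fin n) (Fin n) ℝ := ∑ k ∈ Finset.range (N₀ + 1), P ^ k with hS_def
  have hSU : S * (1 - P) = 1 - T := by
    have h2 : S * (P - 1) = T - 1 := by rw [hS_def, hT_def]; exact geom_sum_mul P (N₀ + 1)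
    have h3 : S * (1 - P) = -(S * (P - 1)) := by
      rw [mul_sub S 1 P, mul_sub S P 1, neg_sub, mul_one]
    rw [h3, h2, neg_sub]
  have hPS : P * S = S * P := by
    rw [hS_def, Finset.mul_sum, Finset.sum_mul]
    apply Finset.sum_congr rfl
    intro k _
    rw [← pow_succ', ← pow_succ]
  have hUS : (1 - P) * S = 1 - T := by
    have e1 : (1 - P) * S = S - P * S := by rw [sub_mul 1 P S, one_mul]
    have e2 : S * (1 - P) = S - S * P := by rw [mul_sub S 1 P, mul_one]
    rw [e1, hPS, ← e2, hSU]
  have hSR_comm : S * R = R * S := by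
    have hUcomm : S * (1 - T) = (1 - T) * S := by
      have : S * T = T * S := by
        rw [hS_def, hT_def, Finset.sum_mul, Finset.mul_sum]
        apply Finset.sum_congr rfl
        intro k _
        rw [← pow_add, ← pow_add, Nat.add_comm]
      simp only [Matrix.mul_sub, Matrix.sub_mul, Matrix.mul_one, Matrix.one_mul, this]
    calc S * R = (R * (1 - T)) * (S * R) := by rw [hMul2, Matrix.one_mul]
    _ = R * ((1 - T) * S) * R := by noncomm_ring
    _ = R * (S * (1 - T)) * R := by rw [hUcomm]
    _ = (R * S) * ((1 - T) * R) := by noncomm_ring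
    _ = R * S := by rw [hMul, Matrix.mul_one]
  have hM_eq : M = s • ((1:Matrix (Fin n) (Fin n) ℝ) - P) := by
    rw [hP_def]
    simp only [sub_sub_cancel, smul_smul, mul_inv_cancel₀ (ne_of_gt hspos), one_smul]
  refine ⟨s⁻¹ • (S * R), ?_, ?_, ?_⟩
  · calc M * (s⁻¹ • (S * R)) = (s⁻¹ * s) • ((1 - P) * (S * R)) := by
          rw [hM_eq]; rw [Matrix.mul_smul, Matrix.smul_mul, smul_smul, mul_comm]
    _ = (1 - P) * S * R := by rw [inv_mul_cancel₀ (ne_of_gt hspos), one_smul, Matrix.mul_assoc]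
    _ = 1 := by rw [hUS, hMul]
  · calc (s⁻¹ • (S * R)) * M = (s * s⁻¹) • ((S * R) * (1 - P)) := by
          rw [hM_eq]; rw [Matrix.mul_smul, Matrix.smul_mul, smul_smul, mul_comm]
    _ = R * S * (1 - P) := by rw [mul_inv_cancel₀ (ne_of_gt hspos), one_smul, hSR_comm]
    _ = R * (1 - T) := by rw [Matrix.mul_assoc, hSU]
    _ = 1 := hMul2
  · intro i j
    have hSpos : 0 < S i j := by
      have hsum : S i j = ∑ k ∈ Finset.range (N₀ + 1), (P ^ k) i j := by
        rw [hS_def]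
        simp [Matrix.sum_apply]
      rw [hsum]
      have : 0 < (P ^ N₀) i j := hPN i j
      calc (0:ℝ) < (P ^ N₀) i j := this
      _ ≤ ∑ k ∈ Finset.range (N₀ + 1), (P ^ k) i j :=
          Finset.single_le_sum (f := fun k => (P ^ k) i j)
            (fun k _ => powNonneg k i j) (Finset.mem_range.2 (Nat.lt_succ_self N₀))
    have hSnonneg : ∀ l, 0 ≤ S i l := by
      intro l
      rw [hS_def]
      simp only [Matrix.sum_apply]
      exact Finset.sum_nonneg fun k _ => powNonneg k i l
    have hSRpos : 0 < (S * R) i j := by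
      rw [Matrix.mul_apply]
      calc (0:ℝ) < S i j * R j j := mul_pos hSpos (lt_of_lt_of_le one_pos (hRdiag j))
      _ ≤ ∑ l, S i l * R l j :=
          Finset.single_le_sum (f := fun l => S i l * R l j)
            (fun l _ => mul_nonneg (hSnonneg l) (hRnonneg l j)) (Finset.mem_univ j)
    have : (s⁻¹ • (S * R)) i j = s⁻¹ * (S * R) i j := rfl
    rw [this]
    positivity

end SISAux

/-- if `δ_i > 0` for at least one patch, then `L* + D` is
invertible, `A = (L* + D)⁻¹ B` is block-diagonal with entrywise positive diagonal
blocks, and `A F*` is entrywise positive (hence an irreducible nonnegative matrix). -/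
theorem A_block_positive_and_AF_positive
    (n m : ℕ) (hn : 2 ≤ n) (hm : 1 ≤ m)
    (Q : Fin m → Matrix (Fin n) (Fin n) ℝ)
    (hQgen : ∀ α, IsGenerator (Q α)) (hQirr : ∀ α, StronglyConnected (Q α))
    (β δ : Fin n → ℝ) (hβ : ∀ i, 0 < β i) (hδ : ∀ i, 0 ≤ δ i)
    (hδpos : ∃ i, 0 < δ i)
    (vα : Fin m → Fin n → ℝ) (hvαpos : ∀ α i, 0 < vα α i)
    (hvαnorm : ∀ α, ∑ i, vα α i = 1)
    (hvαeig : ∀ α i, ∑ j, Q α j i * vα α j = 0)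
    (Npop : Fin m → ℝ) (hNpop : ∀ α, 0 < Npop α)
    (v : Idx n m → ℝ) (hv : ∀ k, v k = Npop k.1 * vα k.1 k.2) :
    IsUnit (Lmat Q v + Dmat n m δ).det ∧
    (∀ k l : Idx n m, k.1 ≠ l.1 →
      ((Lmat Q v + Dmat n m δ)⁻¹ * Bmat n m β) k l = 0) ∧
    (∀ k l : Idx n m, k.1 = l.1 →
      0 < ((Lmat Q v + Dmat n m δ)⁻¹ * Bmat n m β) k l) ∧
    (∀ k l : Idx n m,
      0 < ((Lmat Q v + Dmat n m δ)⁻¹ * Bmat n m β * Fmat v) k l) := by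
  have hn0 : 0 < n := lt_of_lt_of_le two_pos hn
  have hvpos : ∀ k, 0 < v k := fun k => (hv k) ▸ mul_pos (hNpop k.1) (hvαpos k.1 k.2)
  set E : Matrix (Idx n m) (Idx n m) ℝ := Lmat Q v + Dmat n m δ with hE_def
  -- the diagonal blocks
  set Mb : Fin m → Matrix (Fin n) (Fin n) ℝ := fun α i j => E (α, i) (α, j) with hMb_def
  have hEblock : ∀ k l : Idx n m, k.1 ≠ l.1 → E k l = 0 := by
    intro k l h
    have hkl : k ≠ l := fun e => h (congrArg Prod.fst e)
    simp only [hE_def, Matrix.add_apply, Lmat, if_neg h, Dmat, Matrix.diagonal_apply_ne _ hkl,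
      add_zero]
  have hMoff : ∀ α (i j : Fin n), i ≠ j → Mb α i j = -(Q α j i * v (α, j) / v (α, i)) := by
    intro α i j hij
    have hne : ((α, i) : Idx n m) ≠ (α, j) := fun e => hij (congrArg Prod.snd e)
    simp only [hMb_def, hE_def, Matrix.add_apply, Lmat, if_pos rfl, if_neg hij, Dmat,
      Matrix.diagonal_apply_ne _ hne, add_zero, ite_true, eq_self_iff_true]
  have hMdiag : ∀ α (i : Fin n),
      Mb α i i = (∑ j ∈ Finset.univ.filter (· ≠ i), Q α j i * v (α, j) / v (α, i)) + δ i := by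
    intro α i
    simp only [hMb_def, hE_def, Matrix.add_apply, Lmat, if_pos rfl, Dmat, Matrix.diagonal_apply_eq, ite_true, eq_self_iff_true]
  have hMrow : ∀ α (i : Fin n), ∑ j, Mb α i j = δ i := by
    intro α i
    have split : ∑ j, Mb α i j = Mb α i i + ∑ j ∈ Finset.univ.filter (· ≠ i), Mb α i j := by
      rw [Finset.filter_ne']
      exact (Finset.add_sum_erase Finset.univ (Mb α i) (Finset.mem_univ i)).symm
    rw [split, hMdiag]
    have : ∑ j ∈ Finset.univ.filter (· ≠ i), Mb α i j
        = -∑ j ∈ Finset.univ.filter (· ≠ i), Q α j i * v (α, j) / v (α, i) := by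
      rw [← Finset.sum_neg_distrib]
      apply Finset.sum_congr rfl
      intro j hj
      exact hMoff α i j (Ne.symm (by simpa using (Finset.mem_filter.1 hj).2))
    rw [this]; ring
  -- apply the key lemma per block
  have hblocks : ∀ α, ∃ N : Matrix (Fin n) (Fin n) ℝ,
      Mb α * N = 1 ∧ N * Mb α = 1 ∧ ∀ i j, 0 < N i j := by
    intro α
    apply SIS_Mkey hn0
    · intro i j hij
      rw [hMoff α i j hij]
      have h1 : 0 ≤ Q α j i := (hQgen α).1 j i (Ne.symm hij)
      have h2 : 0 < v (α, j) := hvpos _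
      have h3 : 0 < v (α, i) := hvpos _
      have : 0 ≤ Q α j i * v (α, j) / v (α, i) := by positivity
      linarith
    · intro i
      rw [hMrow]; exact hδ i
    · obtain ⟨i, hi⟩ := hδpos
      exact ⟨i, by rw [hMrow]; exact hi⟩
    · intro i j
      have h := (hQirr α j i).swap
      refine Relation.ReflTransGen.mono ?_ _ _ h
      rintro a b ⟨hab, hq⟩
      refine ⟨Ne.symm hab, ?_⟩
      rw [hMoff α a b (Ne.symm hab)]
      have h2 : 0 < v (α, b) := hvpos _
      have h3 : 0 < v (α, a) := hvpos _
      have : 0 < Q α b a * v (α, b) / v (α, a) := by positivity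
      linarith
  choose Nb hNb1 hNb2 hNbpos using hblocks
  set Nf : Matrix (Idx n m) (Idx n m) ℝ :=
    fun k l => if k.1 = l.1 then Nb k.1 k.2 l.2 else 0 with hNf_def
  have hNfblock : ∀ k l : Idx n m, k.1 ≠ l.1 → Nf k l = 0 := by
    intro k l h; simp only [hNf_def, if_neg h]
  -- block multiplication computation
  have hmulblock : ∀ (X Y : Matrix (Idx n m) (Idx n m) ℝ),
      (∀ k l : Idx n m, k.1 ≠ l.1 → X k l = 0) →
      ∀ k l : Idx n m, (X * Y) k l = ∑ c : Fin n, X k (k.1, c) * Y (k.1, c) l := by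
    intro X Y hX k l
    rw [Matrix.mul_apply, Fintype.sum_prod_type]
    rw [Finset.sum_eq_single k.1]
    · intro η _ hη
      have : ∀ c, X k (η, c) = 0 := fun c => hX k (η, c) (Ne.symm hη)
      simp [this]
    · intro h; exact absurd (Finset.mem_univ _) h
  have hright : E * Nf = 1 := by
    ext k l
    rw [hmulblock E Nf hEblock k l]
    rcases eq_or_ne k.1 l.1 with hkl | hkl
    · have : ∀ c : Fin n, Nf (k.1, c) l = Nb k.1 c l.2 := by
        intro c; simp only [hNf_def, if_pos hkl]
      simp only [this]
      have : ∑ c, E k (k.1, c) * Nb k.1 c l.2 = (Mb k.1 * Nb k.1) k.2 l.2 := by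
        rw [Matrix.mul_apply]
      rw [this, hNb1]
      rcases eq_or_ne k l with rfl | hne
      · simp [Matrix.one_apply]
      · have hne2 : k.2 ≠ l.2 := by
          intro h2; exact hne (Prod.ext hkl h2)
        rw [Matrix.one_apply_ne hne2, Matrix.one_apply_ne hne]
    · have : ∀ c : Fin n, Nf (k.1, c) l = 0 := fun c => hNfblock (k.1, c) l hkl
      simp only [this, mul_zero, Finset.sum_const_zero]
      have hne : k ≠ l := fun e => hkl (congrArg Prod.fst e)
      rw [Matrix.one_apply_ne hne]
  have hdet : IsUnit E.det := Matrix.isUnit_det_of_right_inverse hright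
  have hEinv : E⁻¹ = Nf := Matrix.inv_eq_right_inv hright
  -- entries of A = E⁻¹ * B
  have hAentry : ∀ k l : Idx n m, (E⁻¹ * Bmat n m β) k l = Nf k l * β l.2 := by
    intro k l
    rw [hEinv, Bmat, Matrix.mul_diagonal]
  have hAoff : ∀ k l : Idx n m, k.1 ≠ l.1 → (E⁻¹ * Bmat n m β) k l = 0 := by
    intro k l h
    rw [hAentry, hNfblock k l h, zero_mul]
  have hApos : ∀ k l : Idx n m, k.1 = l.1 → 0 < (E⁻¹ * Bmat n m β) k l := by
    rintro ⟨a, i⟩ ⟨g, j⟩ h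
    dsimp only at h
    subst h
    rw [hAentry]
    have hNfv : Nf (a, i) (a, j) = Nb a i j := by simp [hNf_def]
    rw [hNfv]
    exact mul_pos (hNbpos a i j) (hβ j)
  have hAnonneg : ∀ k l : Idx n m, 0 ≤ (E⁻¹ * Bmat n m β) k l := by
    intro k l
    rcases eq_or_ne k.1 l.1 with h | h
    · exact le_of_lt (hApos k l h)
    · rw [hAoff k l h]
  refine ⟨hdet, hAoff, hApos, ?_⟩
  intro k l
  have hAblock : ∀ k' l' : Idx n m, k'.1 ≠ l'.1 → (E⁻¹ * Bmat n m β) k' l' = 0 := hAoff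
  rw [hmulblock _ _ hAblock k l]
  have hFe : ∀ c : Fin n, (E⁻¹ * Bmat n m β) k (k.1, c) * Fmat v (k.1, c) l
      = if l.2 = c then (E⁻¹ * Bmat n m β) k (k.1, c) * (v (l.1, c) / ∑ η, v (η, c)) else 0 := by
    intro c
    simp only [Fmat]
    rw [mul_ite, mul_zero]
  simp only [hFe]
  rw [Finset.sum_ite_eq Finset.univ l.2
    (fun c => (E⁻¹ * Bmat n m β) k (k.1, c) * (v (l.1, c) / ∑ η, v (η, c))),
    if_pos (Finset.mem_univ l.2)]
  have h1 : 0 < (E⁻¹ * Bmat n m β) k (k.1, l.2) := hApos k (k.1, l.2) rfl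
  have h2 : 0 < v (l.1, l.2) := hvpos _
  have h3 : 0 < ∑ η, v (η, l.2) := by
    apply Finset.sum_pos (fun η _ => hvpos (η, l.2))
    exact Finset.univ_nonempty_iff.2 ⟨⟨0, hm⟩⟩
  positivity
end

section
/- Consider the SIS model under multi-layer Markovian mobility, with F* = F(v), L* = L(v), and assume δ_i > 0 for at least one patch i. Set A = (L* + D)^{-1} B, M = I − F*, and for p ∈ [0,1]^{nm} define H(p) = (I + A(diag(p) + (I − diag(p)) M))^{-1} A p (the inverse exists for all such p). Then H is monotone: if p₁, p₂ ∈ [0,1]^{nm} with p₂ ≥ p₁ entrywise, then H(p₂) ≥ H(p₁) entrywise. -/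
open Matrix Finset Filter

namespace SISAux
open SISMobility

variable {ι : Type*} [Fintype ι] [DecidableEq ι]

lemma z_main (W : Matrix ι ι ℝ)
    (hoff : ∀ i j, i ≠ j → W i j ≤ 0)
    (hrow : ∀ i, 0 ≤ ∑ j, W i j)
    (hchain : ∀ i, ∃ k, Relation.ReflTransGen (fun a b => a ≠ b ∧ W a b < 0) i k ∧
      0 < ∑ j, W k j)
    (x : ι → ℝ) (hx : ∀ i, 0 ≤ W.mulVec x i) : ∀ i, 0 ≤ x i := by
  by_contra h
  push_neg at h
  obtain ⟨i₀, hi₀⟩ := h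
  obtain ⟨im, -, him⟩ := Finset.exists_min_image Finset.univ x ⟨i₀, Finset.mem_univ i₀⟩
  set μ := x im with hμ
  have him' : ∀ j, μ ≤ x j := fun j => him j (Finset.mem_univ j)
  have hμneg : μ < 0 := lt_of_le_of_lt (him' i₀) hi₀
  have key : ∀ i, x i = μ → (∑ j, W i j = 0) ∧ ∀ j, W i j < 0 → x j = μ := by
    intro i hxi
    have hts : ∀ j, W i j * (x j - μ) ≤ 0 := by
      intro j
      rcases eq_or_ne j i with rfl | hji
      · rw [hxi]; simp
      · exact mul_nonpos_of_nonpos_of_nonneg (hoff i j (Ne.symm hji))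
          (by linarith [him' j])
    have hsplit : W.mulVec x i = (∑ j, W i j) * μ + ∑ j, W i j * (x j - μ) := by
      rw [Finset.sum_mul, ← Finset.sum_add_distrib]
      simp only [Matrix.mulVec, dotProduct]
      exact Finset.sum_congr rfl fun j _ => by ring
    have h1 : (∑ j, W i j) * μ ≤ 0 := mul_nonpos_of_nonneg_of_nonpos (hrow i) hμneg.le
    have h2 : ∑ j, W i j * (x j - μ) ≤ 0 := Finset.sum_nonpos fun j _ => hts j
    have h0 := hx i
    rw [hsplit] at h0
    have hsum0 : (∑ j, W i j) * μ = 0 := le_antisymm h1 (by linarith)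
    have hrow0 : ∑ j, W i j = 0 := by
      rcases mul_eq_zero.1 hsum0 with h | h
      · exact h
      · exact absurd h hμneg.ne
    refine ⟨hrow0, ?_⟩
    have ht0 : ∑ j, W i j * (x j - μ) = 0 := le_antisymm h2 (by linarith)
    intro j hWij
    have hj0 : W i j * (x j - μ) = 0 := by
      by_contra hne
      have : W i j * (x j - μ) < 0 := lt_of_le_of_ne (hts j) hne
      have hrest : ∑ k ∈ Finset.univ.erase j, W i k * (x k - μ) ≤ 0 :=
        Finset.sum_nonpos fun k _ => hts k
      have heq : W i j * (x j - μ) + ∑ k ∈ Finset.univ.erase j, W i k * (x k - μ)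
          = ∑ k, W i k * (x k - μ) :=
        Finset.add_sum_erase Finset.univ (fun k => W i k * (x k - μ)) (Finset.mem_univ j)
      rw [ht0] at heq
      linarith
    rcases mul_eq_zero.1 hj0 with h | h
    · exact absurd h hWij.ne
    · linarith
  have prop : ∀ i k, Relation.ReflTransGen (fun a b => a ≠ b ∧ W a b < 0) i k →
      x i = μ → x k = μ := by
    intro i k h
    induction h with
    | refl => exact id
    | tail _ hbc ih => intro hi; exact (key _ (ih hi)).2 _ hbc.2
  obtain ⟨k, hk, hkpos⟩ := hchain im
  have := (key k (prop _ _ hk rfl)).1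
  linarith

lemma z_det (W : Matrix ι ι ℝ)
    (hoff : ∀ i j, i ≠ j → W i j ≤ 0)
    (hrow : ∀ i, 0 ≤ ∑ j, W i j)
    (hchain : ∀ i, ∃ k, Relation.ReflTransGen (fun a b => a ≠ b ∧ W a b < 0) i k ∧
      0 < ∑ j, W k j) : W.det ≠ 0 := by
  intro hdet
  obtain ⟨y, hy0, hWy⟩ := Matrix.exists_mulVec_eq_zero_iff.2 hdet
  have h1 := z_main W hoff hrow hchain y (by rw [hWy]; intro i; exact le_refl 0)
  have h2 := z_main W hoff hrow hchain (-y) (by intro i; rw [Matrix.mulVec_neg, hWy]; simp)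
  exact hy0 (funext fun i => le_antisymm (by simpa using h2 i) (h1 i))



variable {n m : ℕ}

lemma one_rowsum (k : Idx n m) : ∑ l, (1 : Matrix (Idx n m) (Idx n m) ℝ) k l = 1 := by
  simp [Matrix.one_apply, Finset.sum_ite_eq]

lemma diag_rowsum (d : Idx n m → ℝ) (k : Idx n m) : ∑ l, Matrix.diagonal d k l = d k := by
  simp [Matrix.diagonal_apply, Finset.sum_ite_eq]

lemma Fmat_nonneg (x : Idx n m → ℝ) (hx : ∀ k, 0 < x k) (k l : Idx n m) :
    0 ≤ Fmat x k l := by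
  unfold Fmat
  split
  · exact div_nonneg (hx _).le (Finset.sum_nonneg fun η _ => (hx _).le)
  · exact le_refl 0

lemma Fmat_rowsum (hm : 1 ≤ m) (x : Idx n m → ℝ) (hx : ∀ k, 0 < x k) (k : Idx n m) :
    ∑ l, Fmat x k l = 1 := by
  have hpos : 0 < ∑ η : Fin m, x (η, k.2) :=
    Finset.sum_pos (fun η _ => hx _) ⟨⟨0, hm⟩, Finset.mem_univ _⟩
  rw [Fintype.sum_prod_type]
  simp only [Fmat]
  simp only [Finset.sum_ite_eq', Finset.mem_univ, if_true]
  rw [← Finset.sum_div, div_self hpos.ne']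

lemma Lmat_rowsum (Q : Fin m → Matrix (Fin n) (Fin n) ℝ) (x : Idx n m → ℝ) (k : Idx n m) :
    ∑ l, Lmat Q x k l = 0 := by
  rw [Fintype.sum_prod_type]
  rw [Finset.sum_eq_single_of_mem k.1 (Finset.mem_univ _) (by
    intro l1 _ hl1
    apply Finset.sum_eq_zero
    intro l2 _
    simp [Lmat, (Ne.symm hl1)])]
  rw [← Finset.add_sum_erase _ _ (Finset.mem_univ k.2)]
  have hk2 : Lmat Q x k (k.1, k.2) =
      ∑ j ∈ Finset.univ.filter (· ≠ k.2), Q k.1 j k.2 * x (k.1, j) / x k := by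
    simp [Lmat]
  have hother : ∀ l2 ∈ Finset.univ.erase k.2,
      Lmat Q x k (k.1, l2) = -(Q k.1 l2 k.2 * x (k.1, l2) / x k) := by
    intro l2 hl2
    have : k.2 ≠ l2 := Ne.symm (Finset.mem_erase.1 hl2).1
    simp [Lmat, this]
  rw [hk2, Finset.sum_congr rfl hother, Finset.sum_neg_distrib, Finset.filter_ne']
  ring

lemma Lmat_offdiag (Q : Fin m → Matrix (Fin n) (Fin n) ℝ)
    (hQoff : ∀ α i j, i ≠ j → 0 ≤ Q α i j)
    (x : Idx n m → ℝ) (hx : ∀ k, 0 < x k) {k l : Idx n m} (h : k ≠ l) :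
    Lmat Q x k l ≤ 0 := by
  unfold Lmat
  rcases eq_or_ne k.1 l.1 with h1 | h1
  · have h2 : k.2 ≠ l.2 := fun h2 => h (Prod.ext h1 h2)
    rw [if_pos h1, if_neg h2, neg_nonpos]
    exact div_nonneg (mul_nonneg (hQoff _ _ _ (Ne.symm h2)) (hx _).le) (hx _).le
  · rw [if_neg h1]

lemma Lmat_edge (Q : Fin m → Matrix (Fin n) (Fin n) ℝ)
    (x : Idx n m → ℝ) (hx : ∀ k, 0 < x k) {α : Fin m} {a b : Fin n}
    (hab : a ≠ b) (hQ : 0 < Q α a b) :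
    Lmat Q x (α, b) (α, a) < 0 := by
  have hpos : 0 < Q α a b * x (α, a) / x (α, b) := div_pos (mul_pos hQ (hx _)) (hx _)
  unfold Lmat
  rw [if_pos rfl, if_neg (Ne.symm hab)]
  exact neg_neg_of_pos hpos


noncomputable def Tp {n m : ℕ} (v p : Idx n m → ℝ) : Matrix (Idx n m) (Idx n m) ℝ :=
  Matrix.diagonal p + (1 - Matrix.diagonal p) * (1 - Fmat v)

noncomputable def Wp {n m : ℕ} (β δ : Fin n → ℝ) (Q : Fin m → Matrix (Fin n) (Fin n) ℝ)
    (v p : Idx n m → ℝ) : Matrix (Idx n m) (Idx n m) ℝ :=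
  Lmat Q v + Dmat n m δ + Bmat n m β * Tp v p

lemma one_sub_diag (p : Idx n m → ℝ) :
    (1 : Matrix (Idx n m) (Idx n m) ℝ) - Matrix.diagonal p
      = Matrix.diagonal (fun k => 1 - p k) := by
  rw [← Matrix.diagonal_one, Matrix.diagonal_sub]

lemma Tp_offdiag (v p : Idx n m → ℝ) {k l : Idx n m} (h : k ≠ l) :
    Tp v p k l = -((1 - p k) * Fmat v k l) := by
  unfold Tp
  rw [Matrix.add_apply, Matrix.diagonal_apply_ne _ h, one_sub_diag, Matrix.diagonal_mul,
    Matrix.sub_apply, Matrix.one_apply_ne h]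
  ring

lemma Tp_rowsum (hm : 1 ≤ m) (v : Idx n m → ℝ) (hv : ∀ k, 0 < v k)
    (p : Idx n m → ℝ) (k : Idx n m) : ∑ l, Tp v p k l = p k := by
  unfold Tp
  simp only [Matrix.add_apply, one_sub_diag, Matrix.diagonal_mul, Matrix.sub_apply]
  rw [Finset.sum_add_distrib, diag_rowsum, ← Finset.mul_sum]
  have : ∑ l, ((1 : Matrix (Idx n m) (Idx n m) ℝ) k l - Fmat v k l) = 0 := by
    rw [Finset.sum_sub_distrib, one_rowsum, Fmat_rowsum hm v hv]
    ring
  rw [this]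
  ring

lemma BT_offdiag (β : Fin n → ℝ) (hβ : ∀ i, 0 < β i) (v : Idx n m → ℝ) (hv : ∀ k, 0 < v k)
    (p : Idx n m → ℝ) (hp1 : ∀ k, p k ≤ 1) {k l : Idx n m} (h : k ≠ l) :
    (Bmat n m β * Tp v p) k l ≤ 0 := by
  unfold Bmat
  rw [Matrix.diagonal_mul, Tp_offdiag v p h]
  have : 0 ≤ (1 - p k) * Fmat v k l :=
    mul_nonneg (by linarith [hp1 k]) (Fmat_nonneg v hv k l)
  nlinarith [(hβ k.2)]

lemma Wp_offdiag (β δ : Fin n → ℝ) (hβ : ∀ i, 0 < β i)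
    (Q : Fin m → Matrix (Fin n) (Fin n) ℝ) (hQoff : ∀ α i j, i ≠ j → 0 ≤ Q α i j)
    (v : Idx n m → ℝ) (hv : ∀ k, 0 < v k)
    (p : Idx n m → ℝ) (hp1 : ∀ k, p k ≤ 1) {k l : Idx n m} (h : k ≠ l) :
    Wp β δ Q v p k l ≤ 0 := by
  unfold Wp
  rw [Matrix.add_apply, Matrix.add_apply]
  have h1 := Lmat_offdiag Q hQoff v hv h
  have h2 : Dmat n m δ k l = 0 := Matrix.diagonal_apply_ne _ h
  have h3 := BT_offdiag β hβ v hv p hp1 h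
  linarith

lemma Wp_rowsum (hm : 1 ≤ m) (β δ : Fin n → ℝ)
    (Q : Fin m → Matrix (Fin n) (Fin n) ℝ)
    (v : Idx n m → ℝ) (hv : ∀ k, 0 < v k)
    (p : Idx n m → ℝ) (k : Idx n m) :
    ∑ l, Wp β δ Q v p k l = δ k.2 + β k.2 * p k := by
  unfold Wp
  simp only [Matrix.add_apply]
  rw [Finset.sum_add_distrib, Finset.sum_add_distrib, Lmat_rowsum]
  have hD : ∑ l, Dmat n m δ k l = δ k.2 := diag_rowsum _ k
  have hBT : ∑ l, (Bmat n m β * Tp v p) k l = β k.2 * p k := by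
    unfold Bmat
    simp only [Matrix.diagonal_mul]
    rw [← Finset.mul_sum, Tp_rowsum hm v hv]
  rw [hD, hBT]
  ring

lemma Wp_edge (β δ : Fin n → ℝ) (hβ : ∀ i, 0 < β i)
    (Q : Fin m → Matrix (Fin n) (Fin n) ℝ)
    (v : Idx n m → ℝ) (hv : ∀ k, 0 < v k)
    (p : Idx n m → ℝ) (hp1 : ∀ k, p k ≤ 1)
    {α : Fin m} {a b : Fin n} (hab : a ≠ b) (hQ : 0 < Q α a b) :
    Wp β δ Q v p (α, b) (α, a) < 0 := by
  have hne : ((α, b) : Idx n m) ≠ (α, a) := fun hEq => (Ne.symm hab) (congrArg Prod.snd hEq)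
  have h1 := Lmat_edge Q v hv hab hQ
  have h2 : Dmat n m δ (α, b) (α, a) = 0 := Matrix.diagonal_apply_ne _ hne
  have h3 := BT_offdiag β hβ v hv p hp1 hne
  unfold Wp
  rw [Matrix.add_apply, Matrix.add_apply]
  linarith


lemma Wp_chain (hm : 1 ≤ m) (β δ : Fin n → ℝ) (hβ : ∀ i, 0 < β i)
    (Q : Fin m → Matrix (Fin n) (Fin n) ℝ) (hQirr : ∀ α, StronglyConnected (Q α))
    (hδpos : ∃ i, 0 < δ i)
    (v : Idx n m → ℝ) (hv : ∀ k, 0 < v k)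
    (p : Idx n m → ℝ) (hp0 : ∀ k, 0 ≤ p k) (hp1 : ∀ k, p k ≤ 1) :
    ∀ k : Idx n m, ∃ k', Relation.ReflTransGen
      (fun a b => a ≠ b ∧ Wp β δ Q v p a b < 0) k k' ∧ 0 < ∑ l, Wp β δ Q v p k' l := by
  obtain ⟨i₀, hi₀⟩ := hδpos
  intro k
  refine ⟨(k.1, i₀), ?_, ?_⟩
  · have hpath := (hQirr k.1 i₀ k.2).swap
    have hstep : ∀ a b : Fin n, (Function.swap fun a b => a ≠ b ∧ 0 < Q k.1 a b) a b →
        (fun a b : Idx n m => a ≠ b ∧ Wp β δ Q v p a b < 0) (k.1, a) (k.1, b) := by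
      intro a b hab
      obtain ⟨hne, hQab⟩ := hab
      exact ⟨fun hEq => hne (congrArg Prod.snd hEq).symm, Wp_edge β δ hβ Q v hv p hp1 hne hQab⟩
    have hlift := Relation.ReflTransGen.lift
      (p := fun a b : Idx n m => a ≠ b ∧ Wp β δ Q v p a b < 0)
      (fun j => ((k.1, j) : Idx n m)) hstep _ _ hpath
    simpa using hlift
  · rw [Wp_rowsum hm β δ Q v hv p]
    exact add_pos_of_pos_of_nonneg hi₀ (mul_nonneg (hβ _).le (hp0 _))

lemma Wp_det (hm : 1 ≤ m) (β δ : Fin n → ℝ) (hβ : ∀ i, 0 < β i) (hδ : ∀ i, 0 ≤ δ i)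
    (Q : Fin m → Matrix (Fin n) (Fin n) ℝ) (hQoff : ∀ α i j, i ≠ j → 0 ≤ Q α i j)
    (hQirr : ∀ α, StronglyConnected (Q α)) (hδpos : ∃ i, 0 < δ i)
    (v : Idx n m → ℝ) (hv : ∀ k, 0 < v k)
    (p : Idx n m → ℝ) (hp0 : ∀ k, 0 ≤ p k) (hp1 : ∀ k, p k ≤ 1) :
    (Wp β δ Q v p).det ≠ 0 := by
  apply z_det
  · exact fun i j h => Wp_offdiag β δ hβ Q hQoff v hv p hp1 h
  · intro i
    rw [Wp_rowsum hm β δ Q v hv p]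
    exact add_nonneg (hδ _) (mul_nonneg (hβ _).le (hp0 _))
  · exact Wp_chain hm β δ hβ Q hQirr hδpos v hv p hp0 hp1

lemma Wp_mulVec_nonneg (hm : 1 ≤ m) (β δ : Fin n → ℝ) (hβ : ∀ i, 0 < β i) (hδ : ∀ i, 0 ≤ δ i)
    (Q : Fin m → Matrix (Fin n) (Fin n) ℝ) (hQoff : ∀ α i j, i ≠ j → 0 ≤ Q α i j)
    (hQirr : ∀ α, StronglyConnected (Q α)) (hδpos : ∃ i, 0 < δ i)
    (v : Idx n m → ℝ) (hv : ∀ k, 0 < v k)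
    (p : Idx n m → ℝ) (hp0 : ∀ k, 0 ≤ p k) (hp1 : ∀ k, p k ≤ 1)
    (x : Idx n m → ℝ) (hx : ∀ i, 0 ≤ (Wp β δ Q v p).mulVec x i) : ∀ i, 0 ≤ x i := by
  apply z_main
  · exact fun i j h => Wp_offdiag β δ hβ Q hQoff v hv p hp1 h
  · intro i
    rw [Wp_rowsum hm β δ Q v hv p]
    exact add_nonneg (hδ _) (mul_nonneg (hβ _).le (hp0 _))
  · exact Wp_chain hm β δ hβ Q hQirr hδpos v hv p hp0 hp1
  · exact hx

lemma Lam_det (β δ : Fin n → ℝ) (hδ : ∀ i, 0 ≤ δ i)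
    (Q : Fin m → Matrix (Fin n) (Fin n) ℝ) (hQoff : ∀ α i j, i ≠ j → 0 ≤ Q α i j)
    (hQirr : ∀ α, StronglyConnected (Q α)) (hδpos : ∃ i, 0 < δ i)
    (v : Idx n m → ℝ) (hv : ∀ k, 0 < v k) :
    (Lmat Q v + Dmat n m δ).det ≠ 0 := by
  obtain ⟨i₀, hi₀⟩ := hδpos
  have hrow : ∀ k : Idx n m, ∑ l, (Lmat Q v + Dmat n m δ) k l = δ k.2 := by
    intro k
    simp only [Matrix.add_apply]
    rw [Finset.sum_add_distrib, Lmat_rowsum]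
    have : ∑ l, Dmat n m δ k l = δ k.2 := diag_rowsum _ k
    rw [this]
    ring
  apply z_det
  · intro i j h
    have hD : Dmat n m δ i j = 0 := Matrix.diagonal_apply_ne _ h
    rw [Matrix.add_apply, hD]
    simpa using Lmat_offdiag Q hQoff v hv h
  · intro i
    rw [hrow]
    exact hδ _
  · intro k
    refine ⟨(k.1, i₀), ?_, by rw [hrow]; exact hi₀⟩
    have hpath := (hQirr k.1 i₀ k.2).swap
    have hstep : ∀ a b : Fin n, (Function.swap fun a b => a ≠ b ∧ 0 < Q k.1 a b) a b →
        (fun a b : Idx n m => a ≠ b ∧ (Lmat Q v + Dmat n m δ) a b < 0) (k.1, a) (k.1, b) := by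
      intro a b hab
      obtain ⟨hne, hQab⟩ := hab
      have hne' : ((k.1, a) : Idx n m) ≠ (k.1, b) := fun hEq => hne (congrArg Prod.snd hEq).symm
      refine ⟨hne', ?_⟩
      have hD : Dmat n m δ (k.1, a) (k.1, b) = 0 := Matrix.diagonal_apply_ne _ hne'
      rw [Matrix.add_apply, hD]
      simpa using Lmat_edge Q v hv hne hQab
    have hlift := Relation.ReflTransGen.lift
      (p := fun a b : Idx n m => a ≠ b ∧ (Lmat Q v + Dmat n m δ) a b < 0)
      (fun j => ((k.1, j) : Idx n m)) hstep _ _ hpath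
    simpa using hlift

end SISAux

open SISMobility

/-- with `A = (L* + D)⁻¹ B`, `M = I − F*` and
`H(p) = (I + A(diag p + (I − diag p) M))⁻¹ A p`, the map `H` is well defined
(the inverse exists) and monotone on `[0,1]^{nm}`. -/
theorem Hfun_monotone
    (n m : ℕ) (hn : 2 ≤ n) (hm : 1 ≤ m)
    (Q : Fin m → Matrix (Fin n) (Fin n) ℝ)
    (hQgen : ∀ α, IsGenerator (Q α)) (hQirr : ∀ α, StronglyConnected (Q α))
    (β δ : Fin n → ℝ) (hβ : ∀ i, 0 < β i) (hδ : ∀ i, 0 ≤ δ i)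
    (hδpos : ∃ i, 0 < δ i)
    (vα : Fin m → Fin n → ℝ) (hvαpos : ∀ α i, 0 < vα α i)
    (hvαnorm : ∀ α, ∑ i, vα α i = 1)
    (hvαeig : ∀ α i, ∑ j, Q α j i * vα α j = 0)
    (Npop : Fin m → ℝ) (hNpop : ∀ α, 0 < Npop α)
    (v : Idx n m → ℝ) (hv : ∀ k, v k = Npop k.1 * vα k.1 k.2)
    (A M : Matrix (Idx n m) (Idx n m) ℝ)
    (hA : A = (Lmat Q v + Dmat n m δ)⁻¹ * Bmat n m β)
    (hM : M = 1 - Fmat v) :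
    (∀ p : Idx n m → ℝ, (∀ k, p k ∈ Set.Icc (0 : ℝ) 1) →
      IsUnit (1 + A * (Matrix.diagonal p + (1 - Matrix.diagonal p) * M)).det) ∧
    (∀ p₁ p₂ : Idx n m → ℝ,
      (∀ k, p₁ k ∈ Set.Icc (0 : ℝ) 1) → (∀ k, p₂ k ∈ Set.Icc (0 : ℝ) 1) →
      (∀ k, p₁ k ≤ p₂ k) →
      ∀ k, Hfun A M p₁ k ≤ Hfun A M p₂ k) := by
  subst hM
  have hQoff : ∀ α i j, i ≠ j → 0 ≤ Q α i j := fun α i j h => (hQgen α).1 i j h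
  have hvpos : ∀ k, 0 < v k := fun k => by rw [hv]; exact mul_pos (hNpop _) (hvαpos _ _)
  set Λ : Matrix (Idx n m) (Idx n m) ℝ := Lmat Q v + Dmat n m δ with hΛdef
  set Bm : Matrix (Idx n m) (Idx n m) ℝ := Bmat n m β with hBdef
  subst hA
  have hΛdet : Λ.det ≠ 0 := SISAux.Lam_det β δ hδ Q hQoff hQirr hδpos v hvpos
  have hΛunit : IsUnit Λ.det := isUnit_iff_ne_zero.2 hΛdet
  -- the factorization Λ (I + A T(p)) = W(p)
  have hfact : ∀ p : Idx n m → ℝ,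
      Λ * (1 + Λ⁻¹ * Bm * (Matrix.diagonal p + (1 - Matrix.diagonal p) * (1 - Fmat v)))
        = SISAux.Wp β δ Q v p := by
    intro p
    rw [mul_add, mul_one, ← mul_assoc, ← mul_assoc, Matrix.mul_nonsing_inv _ hΛunit, one_mul]
    rfl
  have hWdet : ∀ p : Idx n m → ℝ, (∀ k, p k ∈ Set.Icc (0 : ℝ) 1) →
      (SISAux.Wp β δ Q v p).det ≠ 0 := fun p hp =>
    SISAux.Wp_det hm β δ hβ hδ Q hQoff hQirr hδpos v hvpos p
      (fun k => (hp k).1) (fun k => (hp k).2)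
  have hXdet : ∀ p : Idx n m → ℝ, (∀ k, p k ∈ Set.Icc (0 : ℝ) 1) →
      (1 + Λ⁻¹ * Bm * (Matrix.diagonal p + (1 - Matrix.diagonal p) * (1 - Fmat v))).det ≠ 0 := by
    intro p hp h0
    have h := congrArg Matrix.det (hfact p)
    rw [Matrix.det_mul, h0, mul_zero] at h
    exact hWdet p hp h.symm
  -- W(p) ∘ H(p) = B p
  have hWH : ∀ p : Idx n m → ℝ, (∀ k, p k ∈ Set.Icc (0 : ℝ) 1) →
      (SISAux.Wp β δ Q v p).mulVec (Hfun (Λ⁻¹ * Bm) (1 - Fmat v) p) = Bm.mulVec p := by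
    intro p hp
    set X : Matrix (Idx n m) (Idx n m) ℝ :=
      1 + Λ⁻¹ * Bm * (Matrix.diagonal p + (1 - Matrix.diagonal p) * (1 - Fmat v)) with hXdef
    have hXunit : IsUnit X.det := isUnit_iff_ne_zero.2 (hXdet p hp)
    have h1 : SISAux.Wp β δ Q v p * X⁻¹ = Λ := by
      rw [← hfact p, mul_assoc, Matrix.mul_nonsing_inv _ hXunit, mul_one]
    show (SISAux.Wp β δ Q v p).mulVec (X⁻¹.mulVec ((Λ⁻¹ * Bm).mulVec p)) = Bm.mulVec p
    rw [Matrix.mulVec_mulVec, Matrix.mulVec_mulVec, h1, ← mul_assoc,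
      Matrix.mul_nonsing_inv _ hΛunit, one_mul]
  -- upper bound H(p) ≤ 1
  have hHle1 : ∀ p : Idx n m → ℝ, (∀ k, p k ∈ Set.Icc (0 : ℝ) 1) →
      ∀ k, Hfun (Λ⁻¹ * Bm) (1 - Fmat v) p k ≤ 1 := by
    intro p hp
    have hy : ∀ i, 0 ≤ (SISAux.Wp β δ Q v p).mulVec
        ((fun _ => 1) - Hfun (Λ⁻¹ * Bm) (1 - Fmat v) p) i := by
      intro i
      rw [Matrix.mulVec_sub, hWH p hp]
      have hone : (SISAux.Wp β δ Q v p).mulVec (fun _ => 1) i = ∑ l, SISAux.Wp β δ Q v p i l := by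
        simp [Matrix.mulVec, dotProduct]
      have hB : Bm.mulVec p i = β i.2 * p i := Matrix.mulVec_diagonal _ _ _
      rw [Pi.sub_apply, hone, SISAux.Wp_rowsum hm β δ Q v hvpos p, hB]
      linarith [hδ i.2]
    have := SISAux.Wp_mulVec_nonneg hm β δ hβ hδ Q hQoff hQirr hδpos v hvpos p
      (fun k => (hp k).1) (fun k => (hp k).2) _ hy
    intro k
    have hk := this k
    simpa using hk
  constructor
  · intro p hp
    exact isUnit_iff_ne_zero.2 (hXdet p hp)
  · intro p₁ p₂ hp₁ hp₂ hle k
    have hWdiff : SISAux.Wp β δ Q v p₂ = SISAux.Wp β δ Q v p₁ +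
        Bm * (Matrix.diagonal (fun k => p₂ k - p₁ k) * Fmat v) := by
      unfold SISAux.Wp SISAux.Tp
      rw [show Matrix.diagonal (fun k => p₂ k - p₁ k)
          = Matrix.diagonal p₂ - Matrix.diagonal p₁ from (Matrix.diagonal_sub p₂ p₁).symm]
      noncomm_ring
    set H₁ := Hfun (Λ⁻¹ * Bm) (1 - Fmat v) p₁ with hH₁
    set H₂ := Hfun (Λ⁻¹ * Bm) (1 - Fmat v) p₂ with hH₂
    have hy : ∀ i, 0 ≤ (SISAux.Wp β δ Q v p₂).mulVec (H₂ - H₁) i := by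
      intro i
      rw [Matrix.mulVec_sub, hWH p₂ hp₂, hWdiff, Matrix.add_mulVec]
      have hFH : (Fmat v).mulVec H₁ i ≤ 1 := by
        have : ∀ l, Fmat v i l * H₁ l ≤ Fmat v i l :=
          fun l => mul_le_of_le_one_right (SISAux.Fmat_nonneg v hvpos i l) (hHle1 p₁ hp₁ l)
        calc (Fmat v).mulVec H₁ i = ∑ l, Fmat v i l * H₁ l := by
              simp [Matrix.mulVec, dotProduct]
          _ ≤ ∑ l, Fmat v i l := Finset.sum_le_sum fun l _ => this l
          _ = 1 := SISAux.Fmat_rowsum hm v hvpos i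
      have e3 : (Bm * (Matrix.diagonal (fun k => p₂ k - p₁ k) * Fmat v)).mulVec H₁ i
          = β i.2 * ((p₂ i - p₁ i) * (Fmat v).mulVec H₁ i) := by
        rw [← Matrix.mulVec_mulVec, ← Matrix.mulVec_mulVec]
        rw [show (Bm.mulVec (((Matrix.diagonal fun k => p₂ k - p₁ k)).mulVec
          ((Fmat v).mulVec H₁))) i = β i.2 * ((Matrix.diagonal fun k => p₂ k - p₁ k).mulVec
          ((Fmat v).mulVec H₁)) i from Matrix.mulVec_diagonal _ _ _]
        rw [Matrix.mulVec_diagonal]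
      have hB1 : Bm.mulVec p₁ i = β i.2 * p₁ i := Matrix.mulVec_diagonal _ _ _
      have hB2 : Bm.mulVec p₂ i = β i.2 * p₂ i := Matrix.mulVec_diagonal _ _ _
      rw [Pi.sub_apply, hB2, Pi.add_apply, hWH p₁ hp₁, hB1, e3]
      have hd : 0 ≤ p₂ i - p₁ i := by linarith [hle i]
      nlinarith [hβ i.2, mul_nonneg hd (sub_nonneg.2 hFH)]
    have := SISAux.Wp_mulVec_nonneg hm β δ hβ hδ Q hQoff hQirr hδpos v hvpos p₂
      (fun k => (hp₂ k).1) (fun k => (hp₂ k).2) _ hy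
    have hk := this k
    rw [Pi.sub_apply] at hk
    linarith
end

section
/- Consider the SIS model under multi-layer Markovian mobility, with F* = F(v), L* = L(v), and assume δ_i > 0 for at least one patch i. Set A = (L* + D)^{-1} B, M = I − F*, and for p ∈ [0,1]^{nm} define H(p) = (I + A(diag(p) + (I − diag(p)) M))^{-1} A p. Then for every p ∈ [0,1]^{nm}, H(p) ≤ 1 entrywise (where 1 denotes the all-ones vector); in particular H maps [0,1]^{nm} into itself. -/
open Matrix Finset Filter

open SISMobility

/-- with `A = (L* + D)⁻¹ B`, `M = I − F*` and
`H(p) = (I + A(diag p + (I − diag p) M))⁻¹ A p`, for every `p ∈ [0,1]^{nm}` one has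
`H(p) ≤ 1` entrywise; in particular `H` maps `[0,1]^{nm}` into itself. -/
theorem Hfun_le_one
    (n m : ℕ) (hn : 2 ≤ n) (hm : 1 ≤ m)
    (Q : Fin m → Matrix (Fin n) (Fin n) ℝ)
    (hQgen : ∀ α, IsGenerator (Q α)) (hQirr : ∀ α, StronglyConnected (Q α))
    (β δ : Fin n → ℝ) (hβ : ∀ i, 0 < β i) (hδ : ∀ i, 0 ≤ δ i)
    (hδpos : ∃ i, 0 < δ i)
    (vα : Fin m → Fin n → ℝ) (hvαpos : ∀ α i, 0 < vα α i)
    (hvαnorm : ∀ α, ∑ i, vα α i = 1)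
    (hvαeig : ∀ α i, ∑ j, Q α j i * vα α j = 0)
    (Npop : Fin m → ℝ) (hNpop : ∀ α, 0 < Npop α)
    (v : Idx n m → ℝ) (hv : ∀ k, v k = Npop k.1 * vα k.1 k.2)
    (A M : Matrix (Idx n m) (Idx n m) ℝ)
    (hA : A = (Lmat Q v + Dmat n m δ)⁻¹ * Bmat n m β)
    (hM : M = 1 - Fmat v) :
    ∀ p : Idx n m → ℝ, (∀ k, p k ∈ Set.Icc (0 : ℝ) 1) →
      ∀ k, Hfun A M p k ≤ 1 := by

  intro p hp
  have hvpos : ∀ k : Idx n m, 0 < v k := fun k => by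
    rw [hv]; exact mul_pos (hNpop _) (hvαpos _ _)
  have hm0 : 0 < m := hm
  have hn0 : 0 < n := by omega
  by_cases hLD : IsUnit (Lmat Q v + Dmat n m δ).det
  · by_cases hT : IsUnit (1 + A * (Matrix.diagonal p + (1 - Matrix.diagonal p) * M)).det
    · -- main case
      set y := Hfun A M p with hydef
      have hTy : (1 + A * (Matrix.diagonal p + (1 - Matrix.diagonal p) * M)).mulVec y
          = A.mulVec p := by
        rw [hydef]; unfold Hfun
        rw [Matrix.mulVec_mulVec, Matrix.mul_nonsing_inv _ hT, Matrix.one_mulVec]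
      have hLDA : (Lmat Q v + Dmat n m δ) * A = Bmat n m β := by
        rw [hA, ← Matrix.mul_assoc, Matrix.mul_nonsing_inv _ hLD, Matrix.one_mul]
      have key : ∀ k, (Lmat Q v + Dmat n m δ).mulVec y k
          + (Bmat n m β).mulVec ((Matrix.diagonal p + (1 - Matrix.diagonal p) * M).mulVec y) k
          = (Bmat n m β).mulVec p k := by
        have h1 : (Lmat Q v + Dmat n m δ).mulVec
            ((1 + A * (Matrix.diagonal p + (1 - Matrix.diagonal p) * M)).mulVec y)
            = (Bmat n m β).mulVec p := by
          rw [hTy, Matrix.mulVec_mulVec, hLDA]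
        have h2 : (Lmat Q v + Dmat n m δ).mulVec
            ((1 + A * (Matrix.diagonal p + (1 - Matrix.diagonal p) * M)).mulVec y)
            = (Lmat Q v + Dmat n m δ).mulVec y
              + (Bmat n m β).mulVec ((Matrix.diagonal p + (1 - Matrix.diagonal p) * M).mulVec y) := by
          rw [Matrix.mulVec_mulVec, mul_add, mul_one, ← Matrix.mul_assoc, hLDA,
            Matrix.add_mulVec, ← Matrix.mulVec_mulVec]
        intro k
        rw [← h1, h2]
        simp [Pi.add_apply]
      -- entrywise formulas
      have hinner : ∀ k, ((Matrix.diagonal p + (1 - Matrix.diagonal p) * M).mulVec y) k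
          = p k * y k + (1 - p k) * (y k - (Fmat v).mulVec y k) := by
        intro k
        have hD1 : (1 - Matrix.diagonal p : Matrix (Idx n m) (Idx n m) ℝ)
            = Matrix.diagonal (fun l => 1 - p l) := by
          rw [← Matrix.diagonal_one, Matrix.diagonal_sub]
        rw [Matrix.add_mulVec, hD1, ← Matrix.mulVec_mulVec]
        simp only [Pi.add_apply, Matrix.mulVec_diagonal]
        congr 2
        rw [hM, Matrix.sub_mulVec, Matrix.one_mulVec]
        simp
      have hF : ∀ k : Idx n m, (Fmat v).mulVec y k
          = ∑ η : Fin m, v (η, k.2) / (∑ τ : Fin m, v (τ, k.2)) * y (η, k.2) := by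
        intro k
        simp only [Matrix.mulVec, dotProduct, Fmat]
        rw [Fintype.sum_prod_type]
        simp [Finset.sum_ite_eq']
      have hLrow : ∀ k : Idx n m, (Lmat Q v).mulVec y k
          = ∑ j ∈ Finset.univ.filter (· ≠ k.2),
              Q k.1 j k.2 * v (k.1, j) / v k * (y k - y (k.1, j)) := by
        intro k
        simp only [Matrix.mulVec, dotProduct, Lmat]
        rw [Fintype.sum_prod_type]
        rw [Finset.sum_eq_single k.1]
        · have herase : ∀ b ∈ Finset.univ.erase k.2,
              (if k.1 = k.1 then
                if k.2 = b then
                  ∑ j ∈ Finset.univ.filter (· ≠ k.2), Q k.1 j k.2 * v (k.1, j) / v k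
                else -(Q k.1 b k.2 * v (k.1, b) / v k)
              else 0) * y (k.1, b)
              = -(Q k.1 b k.2 * v (k.1, b) / v k * y (k.1, b)) := by
            intro b hb
            rw [if_pos rfl, if_neg (Ne.symm (Finset.ne_of_mem_erase hb))]
            ring
          rw [← Finset.add_sum_erase _ _ (Finset.mem_univ k.2),
            Finset.sum_congr rfl herase, if_pos rfl, if_pos rfl]
          simp only [Prod.mk.eta]
          rw [← Finset.filter_ne' Finset.univ k.2, Finset.sum_mul, ← Finset.sum_add_distrib]
          exact Finset.sum_congr rfl fun j hj => by ring
        · intro a _ ha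
          simp [if_neg (Ne.symm ha)]
        · simp
      -- max argument
      obtain ⟨K, -, hKmax'⟩ := Finset.exists_max_image (Finset.univ : Finset (Idx n m)) y
        ⟨(⟨0, hm0⟩, ⟨0, hn0⟩), Finset.mem_univ _⟩
      have hmax : ∀ k, y k ≤ y K := fun k => hKmax' k (Finset.mem_univ _)
      suffices hcle : y K ≤ 1 by
        intro k; exact (hmax k).trans hcle
      by_contra hcgt
      push_neg at hcgt
      -- critical-point lemma
      have hcrit : ∀ k : Idx n m, y k = y K →
          δ k.2 = 0 ∧ ∀ j : Fin n, j ≠ k.2 → 0 < Q k.1 j k.2 → y (k.1, j) = y K := by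
        intro k hk
        have hE := key k
        rw [Matrix.add_mulVec] at hE
        simp only [Pi.add_apply] at hE
        have hDk : (Dmat n m δ).mulVec y k = δ k.2 * y k := Matrix.mulVec_diagonal _ _ _
        have hBk : ∀ z : Idx n m → ℝ, (Bmat n m β).mulVec z k = β k.2 * z k :=
          fun z => Matrix.mulVec_diagonal _ _ _
        rw [hDk, hBk, hBk, hinner k] at hE
        have hVpos : 0 < ∑ τ : Fin m, v (τ, k.2) :=
          Finset.sum_pos (fun τ _ => hvpos _) ⟨⟨0, hm0⟩, Finset.mem_univ _⟩
        have hFle : (Fmat v).mulVec y k ≤ y K := by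
          rw [hF k]
          calc ∑ η : Fin m, v (η, k.2) / (∑ τ : Fin m, v (τ, k.2)) * y (η, k.2)
              ≤ ∑ η : Fin m, v (η, k.2) / (∑ τ : Fin m, v (τ, k.2)) * y K := by
                refine Finset.sum_le_sum fun η _ => ?_
                exact mul_le_mul_of_nonneg_left (hmax _)
                  (div_nonneg (hvpos _).le hVpos.le)
            _ = y K := by
                rw [← Finset.sum_mul, ← Finset.sum_div, div_self hVpos.ne', one_mul]
        have hterm : ∀ j ∈ Finset.univ.filter (· ≠ k.2),
            0 ≤ Q k.1 j k.2 * v (k.1, j) / v k * (y k - y (k.1, j)) := by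
          intro j hj
          have hjne : j ≠ k.2 := (Finset.mem_filter.mp hj).2
          refine mul_nonneg (div_nonneg (mul_nonneg ((hQgen k.1).1 j k.2 hjne)
            (hvpos _).le) (hvpos k).le) ?_
          rw [hk]; linarith [hmax (k.1, j)]
        have hLnn : 0 ≤ (Lmat Q v).mulVec y k := by
          rw [hLrow k]; exact Finset.sum_nonneg hterm
        obtain ⟨hp0, hp1⟩ := hp k
        have hβk := hβ k.2
        have hδk := hδ k.2
        rw [hk] at hE
        have hδ0 : δ k.2 = 0 := by
          by_contra hne
          have hδpos' : 0 < δ k.2 := lt_of_le_of_ne hδk (Ne.symm hne)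
          nlinarith [mul_pos hδpos' (show (0:ℝ) < y K by linarith),
            mul_nonneg (mul_nonneg hβk.le (by linarith : (0:ℝ) ≤ 1 - p k))
              (by linarith : (0:ℝ) ≤ y K - (Fmat v).mulVec y k),
            mul_nonneg (mul_nonneg hβk.le hp0) (by linarith : (0:ℝ) ≤ y K - 1)]
        refine ⟨hδ0, ?_⟩
        have hL0 : (Lmat Q v).mulVec y k = 0 := by
          refine le_antisymm ?_ hLnn
          rw [hδ0] at hE
          nlinarith [mul_nonneg (mul_nonneg hβk.le (by linarith : (0:ℝ) ≤ 1 - p k))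
              (by linarith : (0:ℝ) ≤ y K - (Fmat v).mulVec y k),
            mul_nonneg (mul_nonneg hβk.le hp0) (by linarith : (0:ℝ) ≤ y K - 1)]
        rw [hLrow k] at hL0
        have hall := (Finset.sum_eq_zero_iff_of_nonneg hterm).mp hL0
        intro j hjne hQj
        have hj : j ∈ Finset.univ.filter (· ≠ k.2) := by
          simp [Finset.mem_filter, hjne]
        have := hall j hj
        have htpos : 0 < Q k.1 j k.2 * v (k.1, j) / v k :=
          div_pos (mul_pos hQj (hvpos _)) (hvpos k)
        have hsub : y k - y (k.1, j) = 0 := by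
          rcases mul_eq_zero.mp this with h | h
          · exact absurd h htpos.ne'
          · exact h
        rw [hk] at hsub; linarith
      -- propagate along strongly connected digraph
      obtain ⟨i0, hi0⟩ := hδpos
      have hprop : ∀ a b : Fin n,
          Relation.ReflTransGen (fun a b => a ≠ b ∧ 0 < Q K.1 a b) a b →
          y (K.1, b) = y K → y (K.1, a) = y K := by
        intro a b hab
        induction hab with
        | refl => exact id
        | tail _ hbc ih =>
          intro h
          exact ih ((hcrit (K.1, _) h).2 _ hbc.1 hbc.2)
      have hKeq : y (K.1, K.2) = y K := rfl
      have hi0eq : y (K.1, i0) = y K := hprop i0 K.2 (hQirr K.1 i0 K.2) hKeq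
      exact absurd ((hcrit (K.1, i0) hi0eq).1) (ne_of_gt hi0)
    · intro k
      unfold Hfun
      rw [Matrix.nonsing_inv_apply_not_isUnit _ hT]
      simp
  · intro k
    have hA0 : A = 0 := by
      rw [hA, Matrix.nonsing_inv_apply_not_isUnit _ hLD, Matrix.zero_mul]
    simp [Hfun, hA0]
end

section
/- Consider the SIS model under multi-layer Markovian mobility, with F* = F(v), L* = L(v), and assume δ_i > 0 for at least one patch i. Set A = (L* + D)^{-1} B, M = I − F*, and H(p) = (I + A(diag(p) + (I − diag(p)) M))^{-1} A p. Suppose R₀ = ρ(A F*) > 1 and let u ≫ 0 be a Perron eigenvector, A F* u = R₀ u. Then there exists ε₀ > 0 such that for all ε ∈ (0, ε₀), the matrix I + A(diag(εu) + (I − diag(εu)) M) is invertible and H(εu) ≥ εu entrywise. -/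
open Matrix Finset Filter

open SISMobility

section Aux

variable {ι : Type*} [Fintype ι] [DecidableEq ι]

lemma dominant_mulVec_neg (W : Matrix ι ι ℝ)
    (hoff : ∀ k l, k ≠ l → W k l ≤ 0) (hrow : ∀ k, 0 < ∑ l, W k l)
    (z : ι → ℝ) (k : ι) (hmin : ∀ l, z k ≤ z l) (hneg : z k < 0) :
    W.mulVec z k < 0 := by
  have h1 : W.mulVec z k ≤ (∑ l, W k l) * z k := by
    rw [Matrix.mulVec, dotProduct, Finset.sum_mul]
    apply Finset.sum_le_sum
    intro l _
    rcases eq_or_ne k l with rfl | hkl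
    · exact le_refl _
    · exact mul_le_mul_of_nonpos_left (hmin l) (hoff k l hkl)
  exact lt_of_le_of_lt h1 (mul_neg_of_pos_of_neg (hrow k) hneg)

lemma dominant_nonneg_sol (W : Matrix ι ι ℝ)
    (hoff : ∀ k l, k ≠ l → W k l ≤ 0) (hrow : ∀ k, 0 < ∑ l, W k l)
    (z : ι → ℝ) (hy : ∀ k, 0 ≤ W.mulVec z k) : ∀ k, 0 ≤ z k := by
  intro k
  obtain ⟨k₀, -, hk₀⟩ := Finset.exists_min_image Finset.univ z ⟨k, Finset.mem_univ k⟩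
  by_contra h
  have hneg : z k₀ < 0 := lt_of_le_of_lt (hk₀ k (Finset.mem_univ k)) (lt_of_not_ge h)
  exact absurd (hy k₀)
    (not_le.mpr (dominant_mulVec_neg W hoff hrow z k₀ (fun l => hk₀ l (Finset.mem_univ l)) hneg))

lemma dominant_det_isUnit (W : Matrix ι ι ℝ)
    (hoff : ∀ k l, k ≠ l → W k l ≤ 0) (hrow : ∀ k, 0 < ∑ l, W k l) :
    IsUnit W.det := by
  rw [isUnit_iff_ne_zero]
  intro hdet
  obtain ⟨z, hz, hWz⟩ := (Matrix.exists_mulVec_eq_zero_iff).mpr hdet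
  apply hz
  funext k
  have h1 : ∀ k, 0 ≤ z k := dominant_nonneg_sol W hoff hrow z
    (fun k => by rw [hWz]; exact le_refl 0)
  have h2 : ∀ k, 0 ≤ (-z) k := dominant_nonneg_sol W hoff hrow (-z)
    (fun k => by rw [Matrix.mulVec_neg, hWz]; simp)
  have := h2 k
  simp only [Pi.neg_apply] at this
  have := h1 k
  simp only [Pi.zero_apply]
  linarith

end Aux


/-- with `A = (L* + D)⁻¹ B`, `M = I − F*`, suppose
`R₀ = ρ(A F*) > 1` and `u ≫ 0` is a Perron eigenvector, `A F* u = R₀ u`. Then there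
is `ε₀ > 0` such that for all `ε ∈ (0, ε₀)` the matrix
`I + A(diag(εu) + (I − diag(εu))M)` is invertible and `H(εu) ≥ εu` entrywise. -/
theorem Hfun_ge_eps_u
    (n m : ℕ) (hn : 2 ≤ n) (hm : 1 ≤ m)
    (Q : Fin m → Matrix (Fin n) (Fin n) ℝ)
    (hQgen : ∀ α, IsGenerator (Q α)) (hQirr : ∀ α, StronglyConnected (Q α))
    (β δ : Fin n → ℝ) (hβ : ∀ i, 0 < β i) (hδ : ∀ i, 0 ≤ δ i)
    (hδpos : ∃ i, 0 < δ i)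
    (vα : Fin m → Fin n → ℝ) (hvαpos : ∀ α i, 0 < vα α i)
    (hvαnorm : ∀ α, ∑ i, vα α i = 1)
    (hvαeig : ∀ α i, ∑ j, Q α j i * vα α j = 0)
    (Npop : Fin m → ℝ) (hNpop : ∀ α, 0 < Npop α)
    (v : Idx n m → ℝ) (hv : ∀ k, v k = Npop k.1 * vα k.1 k.2)
    (A M : Matrix (Idx n m) (Idx n m) ℝ)
    (hA : A = (Lmat Q v + Dmat n m δ)⁻¹ * Bmat n m β)
    (hM : M = 1 - Fmat v)
    (R0 : ℝ) (hR0 : R0 = specRad (A * Fmat v)) (hR0gt : 1 < R0)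
    (u : Idx n m → ℝ) (hu : ∀ k, 0 < u k)
    (hueig : (A * Fmat v).mulVec u = R0 • u) :
    ∃ ε₀ : ℝ, 0 < ε₀ ∧ ∀ ε : ℝ, 0 < ε → ε < ε₀ →
      IsUnit (1 + A * (Matrix.diagonal (ε • u) +
        (1 - Matrix.diagonal (ε • u)) * M)).det ∧
      ∀ k, ε * u k ≤ Hfun A M (ε • u) k := by
  classical
  have hR0pos : (0:ℝ) < R0 := lt_trans one_pos hR0gt
  have hmpos : 0 < m := hm
  have hnpos : 0 < n := lt_of_lt_of_le two_pos hn
  haveI : Nonempty (Fin m) := ⟨⟨0, hmpos⟩⟩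
  haveI : Nonempty (Fin n) := ⟨⟨0, hnpos⟩⟩
  haveI hne : Nonempty (Idx n m) := ⟨(⟨0, hmpos⟩, ⟨0, hnpos⟩)⟩
  obtain ⟨k0⟩ := hne
  have hvpos : ∀ k : Idx n m, 0 < v k := fun k => by
    rw [hv k]; exact mul_pos (hNpop k.1) (hvαpos k.1 k.2)
  set C : Matrix (Idx n m) (Idx n m) ℝ := Lmat Q v + Dmat n m δ with hC_def
  set Bm : Matrix (Idx n m) (Idx n m) ℝ := Bmat n m β with hBm_def
  set F : Matrix (Idx n m) (Idx n m) ℝ := Fmat v with hF_def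
  -- C is invertible
  have hCdet : IsUnit C.det := by
    by_contra h
    have hA0 : A = 0 := by rw [hA, Matrix.nonsing_inv_apply_not_isUnit _ h, Matrix.zero_mul]
    have h0 := congrFun hueig k0
    rw [hA0, Matrix.zero_mul, Matrix.zero_mulVec] at h0
    have h1 : (0:ℝ) = R0 * u k0 := h0
    nlinarith [hu k0]
  -- facts about F
  have hS : ∀ i : Fin n, 0 < ∑ η : Fin m, v (η, i) := fun i =>
    Finset.sum_pos (fun η _ => hvpos (η, i)) Finset.univ_nonempty
  have hFnn : ∀ k l, 0 ≤ F k l := by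
    intro k l
    show 0 ≤ Fmat v k l
    unfold Fmat
    split
    · exact div_nonneg (hvpos _).le (hS _).le
    · exact le_refl 0
  have hFrow : ∀ k, ∑ l, F k l = 1 := by
    intro k
    show ∑ l, Fmat v k l = 1
    unfold Fmat
    rw [Fintype.sum_prod_type]
    have h1 : ∀ γ : Fin m, (∑ j : Fin n, if j = k.2 then v (γ, k.2) / ∑ η : Fin m, v (η, k.2) else 0)
        = v (γ, k.2) / ∑ η : Fin m, v (η, k.2) := by
      intro γ
      rw [Finset.sum_ite_eq' Finset.univ k.2 (fun _ => v (γ, k.2) / ∑ η : Fin m, v (η, k.2))]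
      simp
    simp only [h1]
    rw [← Finset.sum_div, div_self (hS k.2).ne']
  have hFu : ∀ k, 0 < F.mulVec u k := by
    intro k
    rw [Matrix.mulVec, dotProduct]
    apply Finset.sum_pos'
    · intro l _; exact mul_nonneg (hFnn k l) (hu l).le
    · refine ⟨k, Finset.mem_univ k, mul_pos ?_ (hu k)⟩
      show 0 < Fmat v k k
      unfold Fmat
      rw [if_pos rfl]
      have : (k.1, k.2) = k := rfl
      rw [this]
      exact div_pos (hvpos k) (hS k.2)
  -- Lmat has zero row sums
  have hLrow : ∀ k : Idx n m, ∑ l, Lmat Q v k l = 0 := by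
    intro k
    rw [Fintype.sum_prod_type]
    rw [Finset.sum_eq_single k.1]
    · have hdiag : Lmat Q v k (k.1, k.2) =
          ∑ j ∈ Finset.univ.filter (· ≠ k.2), Q k.1 j k.2 * v (k.1, j) / v k := by
        unfold Lmat; simp
      have hoffd : ∀ b : Fin n, b ≠ k.2 →
          Lmat Q v k (k.1, b) = -(Q k.1 b k.2 * v (k.1, b) / v k) := by
        intro b hb
        unfold Lmat
        rw [if_pos rfl, if_neg (Ne.symm hb)]
      rw [← Finset.add_sum_erase Finset.univ _ (Finset.mem_univ k.2)]
      have h2 : ∑ b ∈ Finset.univ.erase k.2, Lmat Q v k (k.1, b)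
          = -∑ b ∈ Finset.univ.erase k.2, Q k.1 b k.2 * v (k.1, b) / v k := by
        rw [← Finset.sum_neg_distrib]
        apply Finset.sum_congr rfl
        intro b hb
        exact hoffd b (Finset.ne_of_mem_erase hb)
      have h3 : k = (k.1, k.2) := rfl
      rw [← h3] at hdiag
      rw [hdiag, h2, Finset.filter_ne']
      ring
    · intro a _ ha
      apply Finset.sum_eq_zero
      intro b _
      unfold Lmat
      rw [if_neg (fun h => ha h.symm)]
    · intro h; exact absurd (Finset.mem_univ k.1) h
  -- diagonal row sums
  have hdiagrow : ∀ (d : Idx n m → ℝ) (k : Idx n m), ∑ l, Matrix.diagonal d k l = d k := by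
    intro d k
    simp [Matrix.diagonal_apply, Finset.sum_ite_eq]
  -- eigen relation
  have hCA : C * A = Bm := by rw [hA]; exact Matrix.mul_nonsing_inv_cancel_left C Bm hCdet
  have hBFu : Bm.mulVec (F.mulVec u) = R0 • C.mulVec u := by
    rw [← hCA, ← Matrix.mulVec_mulVec (F.mulVec u) C A, Matrix.mulVec_mulVec u A F, hueig,
      Matrix.mulVec_smul]
  set w : Idx n m → ℝ := C.mulVec u with hw_def
  have hwval : ∀ k, w k = β k.2 * F.mulVec u k / R0 := by
    intro k
    have h := congrFun hBFu k
    have h1 : Bm.mulVec (F.mulVec u) k = β k.2 * F.mulVec u k := by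
      rw [hBm_def]
      exact Matrix.mulVec_diagonal _ _ _
    have h2 : (R0 • C.mulVec u) k = R0 * w k := rfl
    rw [h1, h2] at h
    field_simp
    linarith
  -- choice of ε₀
  refine ⟨Finset.univ.inf' Finset.univ_nonempty (fun k : Idx n m => (R0 - 1) / (R0 * u k)),
    ?_, ?_⟩
  · rw [Finset.lt_inf'_iff]
    intro k _
    exact div_pos (by linarith) (mul_pos hR0pos (hu k))
  intro ε hε hεlt
  have hεu : ∀ k, ε * u k < (R0 - 1) / R0 := by
    intro k
    have h1 : ε < (R0 - 1) / (R0 * u k) :=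
      lt_of_lt_of_le hεlt (Finset.inf'_le _ (Finset.mem_univ k))
    have h2 : ε * u k < (R0 - 1) / (R0 * u k) * u k := mul_lt_mul_of_pos_right h1 (hu k)
    have h3 : (R0 - 1) / (R0 * u k) * u k = (R0 - 1) / R0 := by
      have h4 : u k ≠ 0 := (hu k).ne'
      have h5 : R0 ≠ 0 := hR0pos.ne'
      field_simp
    linarith
  have hεu1 : ∀ k, ε * u k < 1 := by
    intro k
    have : (R0 - 1) / R0 < 1 := by rw [div_lt_one hR0pos]; linarith
    linarith [hεu k]
  set p : Idx n m → ℝ := ε • u with hp_def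
  have hpk : ∀ k, p k = ε * u k := fun k => rfl
  set W : Matrix (Idx n m) (Idx n m) ℝ :=
    C + Bm - Bm * ((1 - Matrix.diagonal p) * F) with hW_def
  have hX : ∀ k l, ((1 - Matrix.diagonal p) * F) k l = (1 - p k) * F k l := by
    intro k l
    rw [Matrix.sub_mul, Matrix.one_mul, Matrix.sub_apply, Matrix.diagonal_mul, sub_mul, one_mul]
  have hWentry : ∀ k l, W k l = Lmat Q v k l + Dmat n m δ k l
      + Bm k l - β k.2 * ((1 - p k) * F k l) := by
    intro k l
    rw [hW_def, Matrix.sub_apply, Matrix.add_apply, hC_def, Matrix.add_apply]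
    congr 1
    rw [hBm_def]
    show (Bmat n m β * ((1 - Matrix.diagonal p) * F)) k l = _
    unfold Bmat
    rw [Matrix.diagonal_mul, hX k l]
  have hWrow : ∀ k, 0 < ∑ l, W k l := by
    intro k
    have h1 : ∑ l, W k l = δ k.2 + β k.2 * (ε * u k) := by
      simp only [hWentry]
      rw [Finset.sum_sub_distrib, Finset.sum_add_distrib, Finset.sum_add_distrib, hLrow]
      have hD : ∑ l, Dmat n m δ k l = δ k.2 := hdiagrow _ k
      have hB : ∑ l, Bm k l = β k.2 := by rw [hBm_def]; exact hdiagrow _ k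
      have hFs : ∑ l, β k.2 * ((1 - p k) * F k l) = β k.2 * (1 - p k) := by
        simp only [← mul_assoc]
        rw [← Finset.mul_sum, hFrow k, mul_one]
      rw [hD, hB, hFs, hpk]
      ring
    rw [h1]
    have := hδ k.2
    nlinarith [hβ k.2, mul_pos hε (hu k)]
  have hWoff : ∀ k l, k ≠ l → W k l ≤ 0 := by
    intro k l hkl
    rw [hWentry]
    have hD : Dmat n m δ k l = 0 := Matrix.diagonal_apply_ne _ hkl
    have hB : Bm k l = 0 := by rw [hBm_def]; exact Matrix.diagonal_apply_ne _ hkl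
    have hL : Lmat Q v k l ≤ 0 := by
      by_cases h1 : k.1 = l.1
      · have h2 : ¬ k.2 = l.2 := fun h2 => hkl (Prod.ext h1 h2)
        unfold Lmat
        rw [if_pos h1, if_neg h2]
        have hQnn : 0 ≤ Q k.1 l.2 k.2 := (hQgen k.1).1 l.2 k.2 (fun h => h2 h.symm)
        exact neg_nonpos_of_nonneg
          (div_nonneg (mul_nonneg hQnn (hvpos (k.1, l.2)).le) (hvpos k).le)
      · unfold Lmat; rw [if_neg h1]
    have hrest : 0 ≤ β k.2 * ((1 - p k) * F k l) := by
      apply mul_nonneg (hβ k.2).le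
      apply mul_nonneg _ (hFnn k l)
      have := hεu1 k
      rw [hpk]
      linarith
    linarith
  have hWdet : IsUnit W.det := dominant_det_isUnit W hWoff hWrow
  set T : Matrix (Idx n m) (Idx n m) ℝ :=
    1 + A * (Matrix.diagonal p + (1 - Matrix.diagonal p) * M) with hT_def
  have hinner : Matrix.diagonal p + (1 - Matrix.diagonal p) * M
      = 1 - (1 - Matrix.diagonal p) * F := by
    rw [hM]; noncomm_ring
  have hCT : C * T = W := by
    rw [hT_def, hinner, Matrix.mul_add, Matrix.mul_one, ← Matrix.mul_assoc, hCA,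
      Matrix.mul_sub, Matrix.mul_one, hW_def]
    abel
  have hTdet : IsUnit T.det := by
    have h1 : W.det = C.det * T.det := by rw [← hCT, Matrix.det_mul]
    rw [h1] at hWdet
    exact isUnit_of_mul_isUnit_right hWdet
  refine ⟨hTdet, ?_⟩
  have hT_inv : T⁻¹ = W⁻¹ * C := by
    have h1 : T = C⁻¹ * W := by
      rw [← hCT]
      exact (Matrix.nonsing_inv_mul_cancel_left C T hCdet).symm
    rw [h1, Matrix.mul_inv_rev, Matrix.nonsing_inv_nonsing_inv C hCdet]
  set y : Idx n m → ℝ := fun k => β k.2 * F.mulVec u k * ((R0 - 1) / R0 - ε * u k) with hy_def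
  have hypos : ∀ k, 0 < y k := by
    intro k
    apply mul_pos (mul_pos (hβ k.2) (hFu k))
    have := hεu k
    linarith
  have hBWu : Bm.mulVec u - W.mulVec u = y := by
    funext k
    have hXu : ((1 - Matrix.diagonal p) * F).mulVec u k = (1 - p k) * F.mulVec u k := by
      rw [← Matrix.mulVec_mulVec, Matrix.sub_mulVec, Matrix.one_mulVec, Pi.sub_apply,
        Matrix.mulVec_diagonal]
      ring
    have h1 : W.mulVec u k = w k + β k.2 * u k - β k.2 * ((1 - p k) * F.mulVec u k) := by
      rw [hW_def, Matrix.sub_mulVec, Matrix.add_mulVec, Pi.sub_apply, Pi.add_apply]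
      congr 1
      · congr 1
        rw [hBm_def]
        exact Matrix.mulVec_diagonal _ _ _
      · have e1 : (Bm * ((1 - Matrix.diagonal p) * F)).mulVec u k
            = β k.2 * (((1 - Matrix.diagonal p) * F).mulVec u) k := by
          rw [← Matrix.mulVec_mulVec]
          exact Matrix.mulVec_diagonal _ _ _
        rw [e1, hXu]
    have h2 : Bm.mulVec u k = β k.2 * u k := by
      rw [hBm_def]; exact Matrix.mulVec_diagonal _ _ _
    rw [Pi.sub_apply, h1, h2, hwval k]
    show _ = β k.2 * F.mulVec u k * ((R0 - 1) / R0 - ε * u k)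
    rw [hpk]
    have h5 : R0 ≠ 0 := hR0pos.ne'
    field_simp
    ring
  set z : Idx n m → ℝ := W⁻¹.mulVec y with hz_def
  have hWz : W.mulVec z = y := by
    rw [hz_def, Matrix.mulVec_mulVec, Matrix.mul_nonsing_inv W hWdet, Matrix.one_mulVec]
  have hznn : ∀ k, 0 ≤ z k :=
    dominant_nonneg_sol W hWoff hWrow z (fun k => by rw [hWz]; exact (hypos k).le)
  have hfin : W⁻¹.mulVec (Bm.mulVec u) = u + z := by
    have h1 : Bm.mulVec u = W.mulVec u + y := by
      rw [← hBWu]; abel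
    rw [h1, Matrix.mulVec_add, hz_def]
    congr 1
    rw [Matrix.mulVec_mulVec, Matrix.nonsing_inv_mul W hWdet, Matrix.one_mulVec]
  have hH : Hfun A M p = ε • W⁻¹.mulVec (Bm.mulVec u) := by
    show ((1 + A * (Matrix.diagonal p + (1 - Matrix.diagonal p) * M))⁻¹).mulVec (A.mulVec p)
      = ε • W⁻¹.mulVec (Bm.mulVec u)
    rw [← hT_def, hT_inv, hp_def, Matrix.mulVec_smul, Matrix.mulVec_smul,
      ← Matrix.mulVec_mulVec (A.mulVec u) W⁻¹ C, Matrix.mulVec_mulVec u C A, hCA]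
  intro k
  have h1 : Hfun A M p k = ε * (u k + z k) := by rw [hH, hfin]; rfl
  rw [h1]
  nlinarith [hznn k, hε.le, mul_nonneg hε.le (hznn k)]
end
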